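/- arXiv:2601.14890 — 5 statements merged into one kernel-verified Lean document; each statement's English description precedes it below -/
import Mathlib

section
/- Let a, b, c, d, e be real numbers with b ≠ 0, let γ > -1/2, and let h ∈ L¹_γ(ℝ₊). Then for every t ∈ [0,∞), |B^{a,b,c}_{d,e,γ}[h](t)| ≤ (c_γ / |b|^{γ+1}) ‖h‖_{γ,1}. -/
open MeasureTheory Set Complex ENNReal

noncomputable section

/-- Normalized Bessel function `j_γ`. -/
def normBesselJ (γ : ℝ) (x : ℝ) : ℝ :=
  Real.Gamma (γ + 1) *
    ∑' n : ℕ, (-1 : ℝ) ^ n * (x / 2) ^ (2 * n) / ((n.factorial : ℝ) * Real.Gamma ((n : ℝ) + γ + 1))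

/-- The constant `c_γ = 1/(2^γ Γ(γ+1))`. -/
def cGamma (γ : ℝ) : ℝ := 1 / ((2 : ℝ) ^ γ * Real.Gamma (γ + 1))

/-- The quadratic-phase Fourier–Bessel kernel `J^{a,b,c}_{d,e,γ}(t,s)`. -/
def qpKernel (a b c d e γ : ℝ) (t s : ℝ) : ℂ :=
  Complex.exp (-Complex.I * ((a * s ^ 2 + c * t ^ 2 + d * s + e * t : ℝ) : ℂ)) *
    ((normBesselJ γ (s * t / b) : ℝ) : ℂ)

/-- The quadratic-phase Fourier–Bessel transform `B^{a,b,c}_{d,e,γ}[h]`. -/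
def qpFB (a b c d e γ : ℝ) (h : ℝ → ℂ) (t : ℝ) : ℂ :=
  ((cGamma γ : ℝ) : ℂ) / (Complex.I * (b : ℂ)) ^ ((γ : ℂ) + 1) *
    ∫ s in Ioi (0 : ℝ), qpKernel a b c d e γ t s * h s * ((s ^ (2 * γ + 1) : ℝ) : ℂ)

/-- The weighted measure `s^{2γ+1} ds` on `(0,∞)`; `L^p_γ(ℝ₊) = ℒ^p(muGamma γ)`
and `‖·‖_{γ,p} = eLpNorm · p (muGamma γ)`. -/
def muGamma (γ : ℝ) : Measure ℝ :=
  (volume.restrict (Ioi (0 : ℝ))).withDensity fun s => ENNReal.ofReal (s ^ (2 * γ + 1))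

/-- The Fourier–Bessel (Hankel-type) transform `𝓑_γ[h]`. -/
def fourierBessel (γ : ℝ) (h : ℝ → ℂ) (t : ℝ) : ℂ :=
  ((cGamma γ : ℝ) : ℂ) *
    ∫ s in Ioi (0 : ℝ), ((normBesselJ γ (s * t) : ℝ) : ℂ) * h s * ((s ^ (2 * γ + 1) : ℝ) : ℂ)

/-- Area of a triangle with side lengths `s, t, u`. -/
def triArea (s t u : ℝ) : ℝ :=
  1 / 4 * Real.sqrt ((s + t + u) * (s + t - u) * (s - t + u) * (t + u - s))

/-- The kernel `W_γ(s,t,u)` of the Fourier–Bessel translation. -/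
def Wker (γ : ℝ) (s t u : ℝ) : ℝ :=
  if |s - t| ≤ u ∧ u ≤ s + t then
    (2 : ℝ) ^ (2 * γ - 1) * Real.Gamma (γ + 1) / (Real.sqrt Real.pi * Real.Gamma (γ + 1 / 2)) *
      triArea s t u ^ (2 * γ - 1) / (s * t * u) ^ (2 * γ)
  else 0

/-- The quadratic-phase kernel `W^{a,b,d}_γ(s,t,u)`. -/
def Wabd (a b d γ : ℝ) (s t u : ℝ) : ℂ :=
  ((Wker γ s t u : ℝ) : ℂ) *
    Complex.exp (-Complex.I * ((a * (s ^ 2 + t ^ 2 + u ^ 2) + d * (s + t + u) : ℝ) : ℂ))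

/-- The quadratic-phase Fourier–Bessel translation operator `T^{a,b,d}_{t,γ}[h](s)`. -/
def qpTranslate (a b d γ : ℝ) (t : ℝ) (h : ℝ → ℂ) (s : ℝ) : ℂ :=
  ∫ u in Ioi (0 : ℝ),
    h u * Wabd a b d γ s t u * Complex.exp (Complex.I * ((a * u ^ 2 + d * u : ℝ) : ℂ)) *
      ((u ^ (2 * γ + 1) : ℝ) : ℂ)

/-- The quadratic-phase Fourier–Bessel convolution `h ⋆ g`. -/
def qpConv (a b d γ : ℝ) (h g : ℝ → ℂ) (t : ℝ) : ℂ :=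
  ∫ s in Ioi (0 : ℝ),
    qpTranslate a b d γ t h s * g s * Complex.exp (Complex.I * ((a * s ^ 2 + d * s : ℝ) : ℂ)) *
      ((s ^ (2 * γ + 1) : ℝ) : ℂ)

end

section BesselBoundAux
open Real

lemma sin_ge_min {θ : ℝ} (h : θ ∈ Ioo 0 π) : 2/π * min θ (π - θ) ≤ Real.sin θ := by
  rcases le_total θ (π/2) with hle | hle
  · rw [min_eq_left (by linarith [h.2])]
    exact Real.mul_le_sin h.1.le hle
  · rw [min_eq_right (by linarith), ← Real.sin_pi_sub]
    exact Real.mul_le_sin (by linarith [h.2]) (by linarith)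

lemma integrableOn_sin_rpow {p : ℝ} (hp : -1 < p) :
    IntegrableOn (fun θ => Real.sin θ ^ p) (Ioo 0 π) := by
  have hmeas : AEStronglyMeasurable (fun θ => Real.sin θ ^ p)
      (volume.restrict (Ioo 0 π)) :=
    (Real.measurable_sin.pow_const p).aestronglyMeasurable
  rcases le_or_gt 0 p with h0 | h0
  · apply Integrable.mono' (integrable_const (1:ℝ)) hmeas
    filter_upwards [ae_restrict_mem measurableSet_Ioo] with θ hθ
    rw [Real.norm_eq_abs, _root_.abs_of_nonneg (Real.rpow_nonneg
      (Real.sin_nonneg_of_mem_Icc (Ioo_subset_Icc_self hθ)) p)]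
    exact Real.rpow_le_one (Real.sin_nonneg_of_mem_Icc (Ioo_subset_Icc_self hθ))
      (Real.sin_le_one θ) h0
  · have h1 : IntegrableOn (fun θ : ℝ => θ ^ p) (Ioo 0 π) := by
      have := intervalIntegral.intervalIntegrable_rpow' (a := 0) (b := π) hp
      rw [intervalIntegrable_iff_integrableOn_Ioo_of_le Real.pi_pos.le] at this
      exact this
    have h2 : IntegrableOn (fun θ : ℝ => (π - θ) ^ p) (Ioo 0 π) := by
      have := (intervalIntegral.intervalIntegrable_rpow' (a := 0) (b := π) hp).comp_sub_left π
      rw [sub_zero, sub_self, intervalIntegrable_iff] at this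
      simpa [uIoc_of_ge Real.pi_pos.le, integrableOn_Ioc_iff_integrableOn_Ioo] using this
    apply Integrable.mono' (((h1.add h2).const_mul ((2/π) ^ p))) hmeas
    filter_upwards [ae_restrict_mem measurableSet_Ioo] with θ hθ
    have hθ1 : 0 < θ := hθ.1
    have hθ2 : 0 < π - θ := by linarith [hθ.2]
    have hm : 0 < min θ (π - θ) := lt_min hθ1 hθ2
    have hc : (0:ℝ) < 2/π := by positivity
    have key : Real.sin θ ^ p ≤ ((2/π) * min θ (π - θ)) ^ p :=
      Real.rpow_le_rpow_of_nonpos (by positivity) (sin_ge_min hθ) h0.le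
    rw [Real.norm_eq_abs, _root_.abs_of_nonneg (Real.rpow_nonneg
      (Real.sin_nonneg_of_mem_Icc (Ioo_subset_Icc_self hθ)) p)]
    refine key.trans ?_
    rw [Real.mul_rpow hc.le hm.le]
    apply mul_le_mul_of_nonneg_left _ (Real.rpow_nonneg hc.le p)
    rcases min_cases θ (π - θ) with ⟨hmin, _⟩ | ⟨hmin, _⟩ <;> rw [hmin]
    · exact le_add_of_nonneg_right (Real.rpow_nonneg hθ2.le p)
    · exact le_add_of_nonneg_left (Real.rpow_nonneg hθ1.le p)

noncomputable def Imom (γ : ℝ) (n : ℕ) : ℝ :=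
  ∫ θ in Ioo (0:ℝ) π, Real.cos θ ^ (2*n) * Real.sin θ ^ (2*γ)

noncomputable def Rcoef (γ : ℝ) (n : ℕ) : ℝ :=
  Real.Gamma (γ+1) * (2*n).factorial / (4^n * n.factorial * Real.Gamma ((n:ℝ)+γ+1))

variable {γ : ℝ}

lemma integrable_cospow_mul_sin_rpow (hγ : -(1/2) < γ) (n : ℕ) :
    IntegrableOn (fun θ => Real.cos θ ^ n * Real.sin θ ^ (2*γ)) (Ioo 0 π) := by
  apply Integrable.mono' (integrableOn_sin_rpow (p := 2*γ) (by linarith))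
    ((Real.measurable_cos.pow_const n |>.mul
      (Real.measurable_sin.pow_const (2*γ))).aestronglyMeasurable)
  filter_upwards [ae_restrict_mem measurableSet_Ioo] with θ hθ
  have hs : (0:ℝ) ≤ Real.sin θ ^ (2*γ) :=
    Real.rpow_nonneg (Real.sin_nonneg_of_mem_Icc (Ioo_subset_Icc_self hθ)) _
  simp only [Pi.mul_apply]
  rw [Real.norm_eq_abs, _root_.abs_mul, _root_.abs_pow, _root_.abs_of_nonneg hs]
  exact mul_le_of_le_one_left hs (pow_le_one₀ (_root_.abs_nonneg _) (Real.abs_cos_le_one θ))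

lemma Imom_rec (hγ : -(1/2) < γ) (n : ℕ) :
    (2*n+2*γ+2) * Imom γ (n+1) = (2*n+1) * Imom γ n := by
  set F : ℝ → ℝ := fun θ => Real.cos θ ^ (2*n+1) * Real.sin θ ^ (2*γ+1) with hF
  set F' : ℝ → ℝ := fun θ =>
    -(2*n+1) * (Real.cos θ ^ (2*n) * ((1 - Real.cos θ ^ 2) * Real.sin θ ^ (2*γ)))
      + (2*γ+1) * (Real.cos θ ^ (2*n+2) * Real.sin θ ^ (2*γ)) with hF'
  have hg1 : (0:ℝ) < 2*γ+1 := by linarith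
  have hderiv : ∀ θ ∈ Ioo (0:ℝ) π, HasDerivAt F (F' θ) θ := by
    intro θ hθ
    have hspos : 0 < Real.sin θ := Real.sin_pos_of_pos_of_lt_pi hθ.1 hθ.2
    have h1 : HasDerivAt (fun θ => Real.cos θ ^ (2*n+1))
        ((2*n+1 : ℕ) * Real.cos θ ^ (2*n) * (-Real.sin θ)) θ := by
      simpa using (Real.hasDerivAt_cos θ).fun_pow (2*n+1)
    have h2 : HasDerivAt (fun θ => Real.sin θ ^ (2*γ+1))
        (Real.cos θ * (2*γ+1) * Real.sin θ ^ (2*γ+1-1)) θ :=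
      (Real.hasDerivAt_sin θ).rpow_const (Or.inl hspos.ne')
    have := h1.fun_mul h2
    refine this.congr_deriv ?_
    have e1 : Real.sin θ ^ (2*γ+1-1) = Real.sin θ ^ (2*γ) := by norm_num
    have e2 : Real.sin θ ^ (2*γ+1) = Real.sin θ ^ (2*γ) * Real.sin θ :=
      by rw [Real.rpow_add_one hspos.ne']
    have e3 : Real.sin θ * Real.sin θ = 1 - Real.cos θ ^ 2 := by
      have := Real.sin_sq_add_cos_sq θ; nlinarith
    simp only [hF', e1, e2, ← e3]
    push_cast
    ring
  have hcont : ContinuousOn F (Icc 0 π) :=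
    ((Real.continuous_cos.pow _).mul
      (Real.continuous_sin.rpow_const (fun x => Or.inr hg1.le))).continuousOn
  set G : ℝ → ℝ := fun θ =>
    -(2*(n:ℝ)+1) * (Real.cos θ ^ (2*n) * Real.sin θ ^ (2*γ))
      + (2*(n:ℝ)+2*γ+2) * (Real.cos θ ^ (2*n+2) * Real.sin θ ^ (2*γ)) with hG
  have hFG : F' = G := by
    funext θ; rw [hF', hG]; ring
  have hintG : IntegrableOn G (Ioo 0 π) :=
    ((integrable_cospow_mul_sin_rpow hγ (2*n)).const_mul _).add
      ((integrable_cospow_mul_sin_rpow hγ (2*n+2)).const_mul _)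
  have hint : IntervalIntegrable F' volume 0 π := by
    rw [intervalIntegrable_iff_integrableOn_Ioo_of_le Real.pi_pos.le, hFG]
    exact hintG
  have hFTC : ∫ θ in (0:ℝ)..π, F' θ = F π - F 0 :=
    intervalIntegral.integral_eq_sub_of_hasDeriv_right_of_le Real.pi_pos.le hcont
      (fun θ hθ => (hderiv θ hθ).hasDerivWithinAt) hint
  have hF0 : F 0 = 0 := by
    rw [hF]; simp [Real.zero_rpow hg1.ne']
  have hFpi : F π = 0 := by
    rw [hF]; simp [Real.zero_rpow hg1.ne']
  have hzero : ∫ θ in Ioo (0:ℝ) π, G θ = 0 := by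
    rw [← hFG]
    rw [intervalIntegral.integral_of_le Real.pi_pos.le,
      MeasureTheory.integral_Ioc_eq_integral_Ioo] at hFTC
    rw [hFTC, hF0, hFpi, sub_zero]
  rw [hG] at hzero
  rw [MeasureTheory.integral_add ((integrable_cospow_mul_sin_rpow hγ (2*n)).const_mul _)
      ((integrable_cospow_mul_sin_rpow hγ (2*n+2)).const_mul _),
    MeasureTheory.integral_const_mul, MeasureTheory.integral_const_mul] at hzero
  have e4 : 2*(n+1) = 2*n+2 := by ring
  simp only [Imom, e4]
  set A := ∫ θ in Ioo (0:ℝ) π, Real.cos θ ^ (2*n) * Real.sin θ ^ (2*γ)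
  set B := ∫ θ in Ioo (0:ℝ) π, Real.cos θ ^ (2*n+2) * Real.sin θ ^ (2*γ)
  linarith

lemma Gamma_shift_pos (hγ : -(1/2) < γ) (n : ℕ) : 0 < Real.Gamma ((n:ℝ)+γ+1) :=
  Real.Gamma_pos_of_pos (by have : (0:ℝ) ≤ n := n.cast_nonneg; linarith)

lemma Imom_eq (hγ : -(1/2) < γ) (n : ℕ) : Imom γ n = Rcoef γ n * Imom γ 0 := by
  have hG0 : (0:ℝ) < Real.Gamma (γ+1) := Real.Gamma_pos_of_pos (by linarith)
  induction n with
  | zero =>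
    have h0 : Rcoef γ 0 = 1 := by
      rw [Rcoef]
      norm_num
      exact hG0.ne'
    rw [h0, one_mul]
  | succ n ih =>
    have hn : (0:ℝ) ≤ n := n.cast_nonneg
    have hpos : (0:ℝ) < 2*n+2*γ+2 := by linarith
    have hnγ : (0:ℝ) < (n:ℝ)+γ+1 := by linarith
    have hrec := Imom_rec hγ n
    have hGam : Real.Gamma (((n+1:ℕ):ℝ)+γ+1) = ((n:ℝ)+γ+1) * Real.Gamma ((n:ℝ)+γ+1) := by
      have e : (((n+1:ℕ):ℝ)+γ+1) = ((n:ℝ)+γ+1) + 1 := by push_cast; ring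
      rw [e, Real.Gamma_add_one hnγ.ne']
    have h1 := (Gamma_shift_pos hγ n).ne'
    have hR : Rcoef γ (n+1) * (2*(n:ℝ)+2*γ+2) = (2*(n:ℝ)+1) * Rcoef γ n := by
      rw [Rcoef, Rcoef, hGam]
      have e1 : ((2*(n+1)).factorial : ℝ) = (2*(n:ℝ)+2) * ((2*(n:ℝ)+1) * ((2*n).factorial:ℝ)) := by
        have : 2*(n+1) = (2*n+1)+1 := by ring
        rw [this, Nat.factorial_succ, Nat.factorial_succ]
        push_cast; ring
      have e2 : (((n+1).factorial:ℕ) : ℝ) = ((n:ℝ)+1) * (n.factorial : ℝ) := by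
        rw [Nat.factorial_succ]; push_cast; ring
      rw [e1, e2]
      have hf : ((n.factorial:ℕ):ℝ) ≠ 0 := Nat.cast_ne_zero.2 n.factorial_ne_zero
      field_simp
      ring
    calc Imom γ (n+1) = ((2*n+2*γ+2) * Imom γ (n+1)) / (2*n+2*γ+2) := by
          field_simp
      _ = ((2*n+1) * (Rcoef γ n * Imom γ 0)) / (2*n+2*γ+2) := by rw [hrec, ih]
      _ = (Rcoef γ (n+1) * (2*n+2*γ+2)) * Imom γ 0 / (2*n+2*γ+2) := by rw [hR]; ring
      _ = Rcoef γ (n+1) * Imom γ 0 := by field_simp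

lemma poisson (hγ : -(1/2) < γ) (x : ℝ) :
    ∫ θ in Ioo (0:ℝ) π, Real.cos (x * Real.cos θ) * Real.sin θ ^ (2*γ)
      = Imom γ 0 * normBesselJ γ x := by
  set f : ℕ → ℝ → ℝ := fun n θ =>
    (-1:ℝ)^n * (x * Real.cos θ)^(2*n) / ((2*n).factorial : ℝ) * Real.sin θ ^ (2*γ) with hf
  have hpt : ∀ θ : ℝ, Real.cos (x * Real.cos θ) * Real.sin θ ^ (2*γ) = ∑' n, f n θ := by
    intro θ
    exact ((Real.hasSum_cos (x * Real.cos θ)).mul_right (Real.sin θ ^ (2*γ))).tsum_eq.symm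
  have hmeas : ∀ n, AEStronglyMeasurable (f n) (volume.restrict (Ioo 0 π)) := by
    intro n
    exact ((measurable_const.mul ((measurable_const.mul Real.measurable_cos).pow_const (2*n))
      |>.div_const _).mul (Real.measurable_sin.pow_const (2*γ))).aestronglyMeasurable
  have hsum : Summable (fun n : ℕ => |x|^(2*n) / ((2*n).factorial : ℝ)) := by
    have h := Real.summable_pow_div_factorial |x|
    exact h.comp_injective (fun a b hab => by omega)
  have hnn : ∀ n : ℕ, (0:ℝ) ≤ |x|^(2*n) / ((2*n).factorial : ℝ) := fun n => by positivity
  set K := ∫⁻ θ in Ioo (0:ℝ) π, ‖Real.sin θ ^ (2*γ)‖₊ with hK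
  have hKfin : K ≠ ⊤ := by
    have := (integrableOn_sin_rpow (p := 2*γ) (by linarith)).2
    rw [HasFiniteIntegral] at this
    simpa [hK, enorm_eq_nnnorm] using this.ne
  have hfin : (∑' n, ∫⁻ θ in Ioo (0:ℝ) π, ‖f n θ‖₊) ≠ ⊤ := by
    have hb : ∀ n, (∫⁻ θ in Ioo (0:ℝ) π, ‖f n θ‖₊)
        ≤ ENNReal.ofReal (|x|^(2*n) / ((2*n).factorial : ℝ)) * K := by
      intro n
      rw [hK, ← lintegral_const_mul' _ _ ENNReal.ofReal_ne_top]
      apply lintegral_mono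
      intro θ
      have h1 : ‖f n θ‖ ≤ |x|^(2*n) / ((2*n).factorial : ℝ) * ‖Real.sin θ ^ (2*γ)‖ := by
        have hc : |x * Real.cos θ| ≤ |x| := by
          rw [_root_.abs_mul]; exact mul_le_of_le_one_right (_root_.abs_nonneg x) (Real.abs_cos_le_one θ)
        calc ‖f n θ‖ = |x * Real.cos θ|^(2*n) / ((2*n).factorial:ℝ) * ‖Real.sin θ ^ (2*γ)‖ := by
              rw [hf]
              simp only [Real.norm_eq_abs, _root_.abs_mul, _root_.abs_div, _root_.abs_pow, _root_.abs_neg, _root_.abs_one,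
                one_pow, one_mul, Nat.abs_cast]
          _ ≤ |x|^(2*n) / ((2*n).factorial : ℝ) * ‖Real.sin θ ^ (2*γ)‖ := by
              gcongr
      simp only [← enorm_eq_nnnorm, ← ofReal_norm]
      calc ENNReal.ofReal ‖f n θ‖
          ≤ ENNReal.ofReal (|x|^(2*n) / ((2*n).factorial : ℝ) * ‖Real.sin θ ^ (2*γ)‖) :=
            ENNReal.ofReal_le_ofReal h1
        _ = ENNReal.ofReal (|x|^(2*n) / ((2*n).factorial : ℝ)) *
              ENNReal.ofReal ‖Real.sin θ ^ (2*γ)‖ := ENNReal.ofReal_mul (by positivity)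
    apply ne_top_of_le_ne_top (ENNReal.mul_ne_top ENNReal.ofReal_ne_top hKfin)
    calc (∑' n, ∫⁻ θ in Ioo (0:ℝ) π, ‖f n θ‖₊)
        ≤ ∑' n, ENNReal.ofReal (|x|^(2*n) / ((2*n).factorial : ℝ)) * K := ENNReal.tsum_le_tsum hb
      _ = (∑' n, ENNReal.ofReal (|x|^(2*n) / ((2*n).factorial : ℝ))) * K := ENNReal.tsum_mul_right
      _ = ENNReal.ofReal (∑' n, |x|^(2*n) / ((2*n).factorial : ℝ)) * K := by
          rw [ENNReal.ofReal_tsum_of_nonneg hnn hsum]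
  calc ∫ θ in Ioo (0:ℝ) π, Real.cos (x * Real.cos θ) * Real.sin θ ^ (2*γ)
      = ∫ θ in Ioo (0:ℝ) π, ∑' n, f n θ := by
        exact integral_congr_ae (Filter.Eventually.of_forall fun θ => hpt θ)
    _ = ∑' n, ∫ θ in Ioo (0:ℝ) π, f n θ := integral_tsum hmeas hfin
    _ = ∑' n : ℕ, ((-1:ℝ)^n * x^(2*n) / ((2*n).factorial : ℝ)) * Imom γ n := by
        apply tsum_congr; intro n
        rw [Imom, ← MeasureTheory.integral_const_mul]
        apply integral_congr_ae (Filter.Eventually.of_forall fun θ => ?_)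
        rw [hf]; simp only
        rw [mul_pow]
        ring
    _ = ∑' n : ℕ, Imom γ 0 * (Real.Gamma (γ+1) *
          ((-1:ℝ)^n * (x/2)^(2*n) / ((n.factorial : ℝ) * Real.Gamma ((n:ℝ)+γ+1)))) := by
        apply tsum_congr; intro n
        rw [Imom_eq hγ n, Rcoef]
        have h1 := (Gamma_shift_pos hγ n).ne'
        have h2 : ((2*n).factorial : ℝ) ≠ 0 := Nat.cast_ne_zero.2 (Nat.factorial_ne_zero _)
        have h3 : ((n.factorial : ℕ) : ℝ) ≠ 0 := Nat.cast_ne_zero.2 (Nat.factorial_ne_zero _)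
        have e1 : (x/2)^(2*n) = x^(2*n) / 4^n := by
          rw [div_pow, pow_mul 2 2 n]
          norm_num
        rw [e1]
        have h4 : (4:ℝ)^n ≠ 0 := by positivity
        field_simp
    _ = Imom γ 0 * normBesselJ γ x := by
        rw [tsum_mul_left, tsum_mul_left, normBesselJ]

lemma Imom_pos (hγ : -(1/2) < γ) : 0 < Imom γ 0 := by
  have heq : Imom γ 0 = ∫ θ in (0:ℝ)..π, Real.cos θ ^ (2*0) * Real.sin θ ^ (2*γ) := by
    rw [Imom, intervalIntegral.integral_of_le Real.pi_pos.le,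
      MeasureTheory.integral_Ioc_eq_integral_Ioo]
  rw [heq]
  apply intervalIntegral.intervalIntegral_pos_of_pos_on
  · rw [intervalIntegrable_iff_integrableOn_Ioo_of_le Real.pi_pos.le]
    exact integrable_cospow_mul_sin_rpow hγ 0
  · intro θ hθ
    have hs : 0 < Real.sin θ := Real.sin_pos_of_pos_of_lt_pi hθ.1 hθ.2
    have : 0 < Real.sin θ ^ (2*γ) := Real.rpow_pos_of_pos hs _
    simpa using this
  · exact Real.pi_pos

lemma norm_poisson_integrand_le (x θ : ℝ) (hθ : θ ∈ Ioo (0:ℝ) π) :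
    ‖Real.cos (x * Real.cos θ) * Real.sin θ ^ (2*γ)‖ ≤ Real.sin θ ^ (2*γ) := by
  have hs : (0:ℝ) ≤ Real.sin θ ^ (2*γ) :=
    Real.rpow_nonneg (Real.sin_nonneg_of_mem_Icc (Ioo_subset_Icc_self hθ)) _
  rw [Real.norm_eq_abs, _root_.abs_mul, _root_.abs_of_nonneg hs]
  exact mul_le_of_le_one_left hs (Real.abs_cos_le_one _)

lemma abs_normBesselJ_le_one (hγ : -(1/2) < γ) (x : ℝ) : |normBesselJ γ x| ≤ 1 := by
  have hB := Imom_pos hγ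
  have hp := poisson hγ x
  have hIeq : ∫ θ in Ioo (0:ℝ) π, Real.sin θ ^ (2*γ) = Imom γ 0 := by
    rw [Imom]
    apply integral_congr_ae (Filter.Eventually.of_forall fun θ => ?_)
    simp
  have hbound : ‖∫ θ in Ioo (0:ℝ) π, Real.cos (x*Real.cos θ) * Real.sin θ ^ (2*γ)‖
      ≤ Imom γ 0 := by
    rw [← hIeq]
    apply norm_integral_le_of_norm_le (integrableOn_sin_rpow (by linarith))
    filter_upwards [ae_restrict_mem measurableSet_Ioo] with θ hθ
    exact norm_poisson_integrand_le x θ hθ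
  rw [hp, Real.norm_eq_abs, _root_.abs_mul, _root_.abs_of_pos hB] at hbound
  calc |normBesselJ γ x| = (Imom γ 0 * |normBesselJ γ x|) / Imom γ 0 := by field_simp
    _ ≤ Imom γ 0 / Imom γ 0 := by gcongr
    _ = 1 := div_self hB.ne'


end BesselBoundAux

/-- pointwise bound for the quadratic-phase Fourier–Bessel transform
of an `L¹_γ` function. -/
theorem qpFB_abs_le (a b c d e γ : ℝ) (hb : b ≠ 0) (hγ : γ > -(1 / 2))
    (h : ℝ → ℂ) (hh : MemLp h 1 (muGamma γ)) :
    ∀ t ∈ Ici (0 : ℝ),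
      ‖qpFB a b c d e γ h t‖ ≤
        cGamma γ / |b| ^ (γ + 1) * (eLpNorm h 1 (muGamma γ)).toReal := by
  intro t _
  set ν := volume.restrict (Ioi (0:ℝ)) with hν
  set dens : ℝ → ℝ≥0∞ := fun s => ENNReal.ofReal (s ^ (2*γ+1)) with hdens
  have hdens_meas : Measurable dens :=
    (measurable_id.pow_const (2*γ+1)).ennreal_ofReal
  have hdens_ne : ∀ᵐ s ∂ν, dens s ≠ 0 := by
    filter_upwards [ae_restrict_mem measurableSet_Ioi] with s hs
    simp only [hdens, ne_eq, ENNReal.ofReal_eq_zero, not_le]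
    exact Real.rpow_pos_of_pos hs (2*γ+1)
  have hac : ν ≪ muGamma γ :=
    withDensity_absolutelyContinuous' hdens_meas.aemeasurable hdens_ne
  have hhm : AEStronglyMeasurable h ν := hh.1.mono_ac hac
  -- the nonnegative majorant
  set g : ℝ → ℝ := fun s => ‖h s‖ * s ^ (2*γ+1) with hg
  have hgm : AEStronglyMeasurable g ν :=
    hhm.norm.mul (measurable_id.pow_const (2*γ+1)).aestronglyMeasurable
  have hg_nonneg : ∀ᵐ s ∂ν, 0 ≤ g s := by
    filter_upwards [ae_restrict_mem measurableSet_Ioi] with s hs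
    exact mul_nonneg (norm_nonneg _) (Real.rpow_nonneg (le_of_lt hs) _)
  -- lintegral identity
  have hlint : ∫⁻ s, ‖g s‖₊ ∂ν = ∫⁻ s, ‖h s‖₊ ∂(muGamma γ) := by
    have hwd : ∫⁻ s, ‖h s‖₊ ∂(muGamma γ) = ∫⁻ s, (dens * fun s => (‖h s‖₊ : ℝ≥0∞)) s ∂ν :=
      lintegral_withDensity_eq_lintegral_mul₀' hdens_meas.aemeasurable hh.1.enorm
    rw [hwd]
    apply lintegral_congr_ae
    filter_upwards [ae_restrict_mem measurableSet_Ioi] with s hs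
    have hp : (0:ℝ) ≤ s ^ (2*γ+1) := Real.rpow_nonneg hs.le _
    simp only [Pi.mul_apply, hg, hdens]
    rw [← enorm_eq_nnnorm, ← enorm_eq_nnnorm, ← ofReal_norm, ← ofReal_norm, Real.norm_eq_abs,
      abs_mul, abs_norm, _root_.abs_of_nonneg hp, ENNReal.ofReal_mul (norm_nonneg _)]
    ring
  have hsnorm : eLpNorm h 1 (muGamma γ) = ∫⁻ s, ‖h s‖₊ ∂(muGamma γ) :=
    eLpNorm_one_eq_lintegral_enorm
  have hgint : Integrable g ν := by
    refine ⟨hgm, ?_⟩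
    show (∫⁻ s, (‖g s‖₊ : ℝ≥0∞) ∂ν) < ⊤
    rw [hlint, ← hsnorm]
    exact hh.2
  -- value of ∫ g
  have hgval : ∫ s, g s ∂ν = (eLpNorm h 1 (muGamma γ)).toReal := by
    rw [integral_eq_lintegral_of_nonneg_ae hg_nonneg hgm, hsnorm, ← hlint]
    congr 1
    apply lintegral_congr_ae
    filter_upwards [hg_nonneg] with s hs
    rw [← enorm_eq_nnnorm, ← ofReal_norm, Real.norm_eq_abs, _root_.abs_of_nonneg hs]
  -- pointwise bound on the integrand
  have hbound : ∀ᵐ s ∂ν,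
      ‖qpKernel a b c d e γ t s * h s * ((s ^ (2*γ+1) : ℝ) : ℂ)‖ ≤ g s := by
    filter_upwards [ae_restrict_mem measurableSet_Ioi] with s hs
    have hp : (0:ℝ) ≤ s ^ (2*γ+1) := Real.rpow_nonneg hs.le _
    have hker : ‖qpKernel a b c d e γ t s‖ ≤ 1 := by
      rw [qpKernel, norm_mul]
      have h1 : ∀ r : ℝ, ‖Complex.exp (-Complex.I * (r : ℂ))‖ = 1 := by
        intro r
        rw [Complex.norm_exp]
        simp
      rw [h1, one_mul, Complex.norm_real, Real.norm_eq_abs]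
      exact abs_normBesselJ_le_one hγ _
    calc ‖qpKernel a b c d e γ t s * h s * ((s ^ (2*γ+1) : ℝ) : ℂ)‖
        = ‖qpKernel a b c d e γ t s‖ * ‖h s‖ * ‖((s ^ (2*γ+1) : ℝ) : ℂ)‖ := by
          rw [norm_mul, norm_mul]
      _ ≤ 1 * ‖h s‖ * ‖((s ^ (2*γ+1) : ℝ) : ℂ)‖ := by
          gcongr
      _ = g s := by
          rw [one_mul, Complex.norm_real, Real.norm_eq_abs, _root_.abs_of_nonneg hp]
  have hint_le : ‖∫ s in Ioi (0:ℝ), qpKernel a b c d e γ t s * h s * ((s ^ (2*γ+1) : ℝ) : ℂ)‖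
      ≤ (eLpNorm h 1 (muGamma γ)).toReal := by
    rw [← hgval]
    exact norm_integral_le_of_norm_le hgint hbound
  -- the constant
  have hcG : 0 < cGamma γ := by
    rw [cGamma]
    have := Real.Gamma_pos_of_pos (by linarith : (0:ℝ) < γ + 1)
    positivity
  have hCabs : ‖(((cGamma γ : ℝ) : ℂ) / (Complex.I * (b : ℂ)) ^ ((γ : ℂ) + 1))‖
      = cGamma γ / |b| ^ (γ + 1) := by
    have hz : (Complex.I * (b : ℂ)) ≠ 0 :=
      mul_ne_zero Complex.I_ne_zero (Complex.ofReal_ne_zero.2 hb)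
    rw [norm_div, Complex.norm_real, Real.norm_eq_abs, abs_of_pos hcG, Complex.norm_cpow_of_ne_zero hz]
    congr 1
    have him : ((γ : ℂ) + 1).im = 0 := by simp
    have hre : ((γ : ℂ) + 1).re = γ + 1 := by simp
    rw [him, hre, mul_zero, Real.exp_zero, div_one]
    congr 1
    rw [norm_mul, Complex.norm_I, Complex.norm_real, Real.norm_eq_abs, one_mul]
  rw [qpFB, norm_mul, hCabs]
  exact mul_le_mul_of_nonneg_left hint_le (by positivity)
end

section
/- Let a, b, c, d, e be real numbers with b ≠ 0, let γ > -1/2, and let h ∈ L¹_γ(ℝ₊). Then the map t ↦ B^{a,b,c}_{d,e,γ}[h](t) is continuous on [0,∞). -/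
open MeasureTheory Set Complex ENNReal

noncomputable section PoissonAux

namespace QPAux
open MeasureTheory Set

/-- weight function -/
def wP (γ t : ℝ) : ℝ := (1 - t ^ 2) ^ (γ - 1 / 2)

def KP (γ : ℝ) : ℝ := Real.Gamma (γ + 1) / (Real.sqrt Real.pi * Real.Gamma (γ + 1 / 2))

def CP (γ : ℝ) : ℝ := KP γ * ∫ t in Ioo (-1 : ℝ) 1, wP γ t

lemma beta_ofReal_eq {u v : ℝ} {x : ℝ} (hx : x ∈ Icc (0:ℝ) 1) :
    (x:ℂ) ^ ((u:ℂ) - 1) * (1 - (x:ℂ)) ^ ((v:ℂ) - 1)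
      = ((x ^ (u - 1) * (1 - x) ^ (v - 1) : ℝ) : ℂ) := by
  have hx1 : (0:ℝ) ≤ 1 - x := by linarith [hx.2]
  rw [Complex.ofReal_mul, Complex.ofReal_cpow hx.1, Complex.ofReal_cpow hx1]
  push_cast
  ring_nf

lemma betaR_intervalIntegrable {u v : ℝ} (hu : 0 < u) (hv : 0 < v) :
    IntervalIntegrable (fun x : ℝ => x ^ (u - 1) * (1 - x) ^ (v - 1)) volume 0 1 := by
  have hC := Complex.betaIntegral_convergent (u := u) (v := v) (by simpa) (by simpa)
  rw [intervalIntegrable_iff] at hC ⊢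
  have heq : ∀ᵐ x ∂(volume.restrict (uIoc (0:ℝ) 1)),
      (fun y : ℝ => (y:ℂ) ^ ((u:ℂ) - 1) * (1 - (y:ℂ)) ^ ((v:ℂ) - 1)) x
        = ((x ^ (u - 1) * (1 - x) ^ (v - 1) : ℝ) : ℂ) := by
    filter_upwards [ae_restrict_mem measurableSet_uIoc] with x hx
    rw [uIoc_of_le (zero_le_one' ℝ)] at hx
    exact beta_ofReal_eq ⟨hx.1.le, hx.2⟩
  have : IntegrableOn (fun x : ℝ => ((x ^ (u - 1) * (1 - x) ^ (v - 1) : ℝ) : ℂ)) (uIoc (0:ℝ) 1)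
      volume := hC.congr heq
  simpa [IntegrableOn] using this.re.congr (by
    filter_upwards with x
    simp)

lemma betaR_eval {u v : ℝ} (hu : 0 < u) (hv : 0 < v) :
    ∫ x in (0:ℝ)..1, x ^ (u - 1) * (1 - x) ^ (v - 1)
      = Real.Gamma u * Real.Gamma v / Real.Gamma (u + v) := by
  have h := Complex.Gamma_mul_Gamma_eq_betaIntegral (s := u) (t := v) (by simpa) (by simpa)
  have hbeta : Complex.betaIntegral u v
      = ((∫ x in (0:ℝ)..1, x ^ (u - 1) * (1 - x) ^ (v - 1) : ℝ) : ℂ) := by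
    rw [Complex.betaIntegral, ← intervalIntegral.integral_ofReal]
    refine intervalIntegral.integral_congr fun x hx => ?_
    rw [uIcc_of_le (zero_le_one' ℝ)] at hx
    exact beta_ofReal_eq hx
  rw [hbeta] at h
  have hG : Real.Gamma (u + v) ≠ 0 := (Real.Gamma_pos_of_pos (by linarith)).ne'
  have h' : Real.Gamma u * Real.Gamma v
      = Real.Gamma (u + v) * ∫ x in (0:ℝ)..1, x ^ (u - 1) * (1 - x) ^ (v - 1) := by
    have := h
    rw [show ((u:ℂ) + v) = ((u + v : ℝ) : ℂ) by push_cast; ring] at this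
    rw [← Complex.ofReal_inj]
    push_cast [← Complex.Gamma_ofReal]
    simpa using this
  field_simp
  linarith [h']


lemma sqrt_image_Ioo : Real.sqrt '' Ioo (0:ℝ) 1 = Ioo (0:ℝ) 1 := by
  ext t
  constructor
  · rintro ⟨u, ⟨hu0, hu1⟩, rfl⟩
    refine ⟨Real.sqrt_pos.2 hu0, ?_⟩
    have := Real.sqrt_lt_sqrt hu0.le hu1
    simpa using this
  · rintro ⟨h0, h1⟩
    exact ⟨t ^ 2, ⟨by positivity, by nlinarith⟩, Real.sqrt_sq h0.le⟩

lemma sqrt_injOn : InjOn Real.sqrt (Ioo (0:ℝ) 1) := by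
  intro a ha b hb hab
  have := congrArg (fun x : ℝ => x ^ 2) hab
  simpa [Real.sq_sqrt ha.1.le, Real.sq_sqrt hb.1.le] using this

lemma sqrt_hasDeriv {u : ℝ} (hu : u ∈ Ioo (0:ℝ) 1) :
    HasDerivWithinAt Real.sqrt (1 / (2 * Real.sqrt u)) (Ioo (0:ℝ) 1) u :=
  (Real.hasDerivAt_sqrt hu.1.ne').hasDerivWithinAt

lemma subst_eq (γ : ℝ) (n : ℕ) :
    ∀ u ∈ Ioo (0:ℝ) 1,
      |1 / (2 * Real.sqrt u)| • ((Real.sqrt u) ^ (2 * n) * wP γ (Real.sqrt u))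
        = (1 / 2) * (u ^ ((n:ℝ) + 1 / 2 - 1) * (1 - u) ^ (γ + 1 / 2 - 1)) := by
  intro u hu
  have hupos : 0 < u := hu.1
  have hs : 0 < Real.sqrt u := Real.sqrt_pos.2 hupos
  have h1 : Real.sqrt u ^ (2 * n) = u ^ n := by
    rw [pow_mul, Real.sq_sqrt hupos.le]
  have h2 : wP γ (Real.sqrt u) = (1 - u) ^ (γ - 1 / 2) := by
    rw [wP, Real.sq_sqrt hupos.le]
  have h3 : u ^ ((n:ℝ) + 1 / 2 - 1) = u ^ n / Real.sqrt u := by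
    rw [Real.sqrt_eq_rpow, ← Real.rpow_natCast u n, ← Real.rpow_sub hupos]
    congr 1
    ring
  have h4 : γ + 1 / 2 - 1 = γ - 1 / 2 := by ring
  rw [h1, h2, h3, h4, smul_eq_mul, abs_of_pos (by positivity)]
  field_simp

/-- the key beta-type integrand on `(0,1)` -/
lemma half_integral (γ : ℝ) (n : ℕ) :
    (∫ t in Ioo (0:ℝ) 1, t ^ (2 * n) * wP γ t)
      = ∫ u in Ioo (0:ℝ) 1,
          (1 / 2) * (u ^ ((n:ℝ) + 1 / 2 - 1) * (1 - u) ^ (γ + 1 / 2 - 1)) := by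
  have := integral_image_eq_integral_abs_deriv_smul (f := Real.sqrt)
    (f' := fun u => 1 / (2 * Real.sqrt u)) measurableSet_Ioo
    (fun u hu => sqrt_hasDeriv hu) sqrt_injOn (fun t => t ^ (2 * n) * wP γ t)
  rw [sqrt_image_Ioo] at this
  rw [this]
  exact setIntegral_congr_fun measurableSet_Ioo (subst_eq γ n)

lemma half_integrable {γ : ℝ} (hγ : -(1/2) < γ) (n : ℕ) :
    IntegrableOn (fun t : ℝ => t ^ (2 * n) * wP γ t) (Ioo (0:ℝ) 1) := by
  have hbeta : IntegrableOn
      (fun u : ℝ => u ^ ((n:ℝ) + 1 / 2 - 1) * (1 - u) ^ (γ + 1 / 2 - 1)) (Ioo (0:ℝ) 1) := by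
    have h := betaR_intervalIntegrable (u := (n:ℝ) + 1/2) (v := γ + 1/2)
      (by positivity) (by linarith)
    rw [intervalIntegrable_iff_integrableOn_Ioo_of_le (zero_le_one' ℝ)] at h
    exact h
  have hiff := integrableOn_image_iff_integrableOn_abs_deriv_smul (f := Real.sqrt)
    (f' := fun u => 1 / (2 * Real.sqrt u)) measurableSet_Ioo
    (fun u hu => sqrt_hasDeriv hu) sqrt_injOn (fun t => t ^ (2 * n) * wP γ t)
  rw [sqrt_image_Ioo] at hiff
  rw [hiff]
  exact MeasureTheory.IntegrableOn.congr_fun (hbeta.const_mul (1/2))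
    (fun u hu => (subst_eq γ n u hu).symm) measurableSet_Ioo


lemma neg_image_Ioo : (fun t : ℝ => -t) '' Ioo (0:ℝ) 1 = Ioo (-1:ℝ) 0 := by
  ext t
  constructor
  · rintro ⟨u, ⟨h0, h1⟩, rfl⟩
    refine mem_Ioo.mpr ⟨?_, ?_⟩ <;> simp <;> linarith
  · rintro ⟨h0, h1⟩
    exact ⟨-t, ⟨by linarith, by linarith⟩, by simp⟩

lemma integrand_even (γ : ℝ) (n : ℕ) (t : ℝ) :
    (-t) ^ (2 * n) * wP γ (-t) = t ^ (2 * n) * wP γ t := by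
  rw [wP, wP, neg_sq, pow_mul, pow_mul, neg_sq]

lemma reflect_eq (γ : ℝ) (n : ℕ) :
    (∫ t in Ioo (-1:ℝ) 0, t ^ (2 * n) * wP γ t)
      = ∫ t in Ioo (0:ℝ) 1, t ^ (2 * n) * wP γ t := by
  have h := integral_image_eq_integral_abs_deriv_smul (f := fun t : ℝ => -t)
    (f' := fun _ => (-1 : ℝ)) (s := Ioo (0:ℝ) 1) measurableSet_Ioo
    (fun u _ => (hasDerivAt_neg u).hasDerivWithinAt)
    (neg_injective.injOn) (fun t => t ^ (2 * n) * wP γ t)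
  rw [neg_image_Ioo] at h
  rw [h]
  refine setIntegral_congr_fun measurableSet_Ioo fun u _ => ?_
  simp only [smul_eq_mul, abs_neg, abs_one, one_mul, integrand_even γ n u]

lemma reflect_integrable {γ : ℝ} (hγ : -(1/2) < γ) (n : ℕ) :
    IntegrableOn (fun t : ℝ => t ^ (2 * n) * wP γ t) (Ioo (-1:ℝ) 0) := by
  have hiff := integrableOn_image_iff_integrableOn_abs_deriv_smul (f := fun t : ℝ => -t)
    (f' := fun _ => (-1 : ℝ)) (s := Ioo (0:ℝ) 1) measurableSet_Ioo
    (fun u _ => (hasDerivAt_neg u).hasDerivWithinAt)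
    (neg_injective.injOn) (fun t => t ^ (2 * n) * wP γ t)
  rw [neg_image_Ioo] at hiff
  rw [hiff]
  refine MeasureTheory.IntegrableOn.congr_fun (half_integrable hγ n)
    (fun u _ => ?_) measurableSet_Ioo
  simp only [smul_eq_mul, abs_neg, abs_one, one_mul, integrand_even γ n u]

lemma Ioo_split : Ioo (-1:ℝ) 1 = Ioo (-1) 0 ∪ Ico 0 1 :=
  (Ioo_union_Ico_eq_Ioo (by norm_num) (by norm_num)).symm

lemma Ioo_Ico_disj : Disjoint (Ioo (-1:ℝ) 0) (Ico (0:ℝ) 1) := by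
  rw [Set.disjoint_left]
  rintro x ⟨_, h0⟩ ⟨h0', _⟩
  linarith

lemma In_integrable {γ : ℝ} (hγ : -(1/2) < γ) (n : ℕ) :
    IntegrableOn (fun t : ℝ => t ^ (2 * n) * wP γ t) (Ioo (-1:ℝ) 1) := by
  rw [Ioo_split]
  exact (reflect_integrable hγ n).union
    ((integrableOn_Ico_iff_integrableOn_Ioo enorm_ne_top).2 (half_integrable hγ n))

lemma In_eq {γ : ℝ} (hγ : -(1/2) < γ) (n : ℕ) :
    (∫ t in Ioo (-1:ℝ) 1, t ^ (2 * n) * wP γ t)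
      = Real.Gamma ((n:ℝ) + 1/2) * Real.Gamma (γ + 1/2) / Real.Gamma ((n:ℝ) + γ + 1) := by
  have hA : (∫ u in Ioo (0:ℝ) 1, u ^ ((n:ℝ) + 1 / 2 - 1) * (1 - u) ^ (γ + 1 / 2 - 1))
      = Real.Gamma ((n:ℝ) + 1/2) * Real.Gamma (γ + 1/2) / Real.Gamma ((n:ℝ) + γ + 1) := by
    have hb := betaR_eval (u := (n:ℝ) + 1/2) (v := γ + 1/2) (by positivity) (by linarith)
    rw [intervalIntegral.integral_of_le (zero_le_one' ℝ), integral_Ioc_eq_integral_Ioo] at hb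
    rw [hb, show (n:ℝ) + 1/2 + (γ + 1/2) = (n:ℝ) + γ + 1 by ring]
  rw [Ioo_split, setIntegral_union Ioo_Ico_disj measurableSet_Ico (reflect_integrable hγ n)
      ((integrableOn_Ico_iff_integrableOn_Ioo enorm_ne_top).2 (half_integrable hγ n)),
    integral_Ico_eq_integral_Ioo, reflect_eq, half_integral, integral_const_mul, ← hA]
  ring

lemma Gamma_nat_add_half (n : ℕ) :
    Real.Gamma ((n:ℝ) + 1/2)
      = (Nat.factorial (2 * n) : ℝ) * Real.sqrt Real.pi / (4 ^ n * Nat.factorial n) := by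
  have h := Real.Gamma_mul_Gamma_add_half ((n:ℝ) + 1/2)
  rw [show (n:ℝ) + 1/2 + 1/2 = (n:ℝ) + 1 by ring, Real.Gamma_nat_eq_factorial,
    show 2 * ((n:ℝ) + 1/2) = ((2 * n : ℕ) : ℝ) + 1 by push_cast; ring,
    Real.Gamma_nat_eq_factorial,
    show (1 : ℝ) - (((2 * n : ℕ) : ℝ) + 1) = -((2 * n : ℕ) : ℝ) by push_cast; ring,
    Real.rpow_neg (by norm_num : (0:ℝ) ≤ 2), Real.rpow_natCast] at h
  have h2 : ((2:ℝ) ^ (2 * n)) = 4 ^ n := by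
    rw [pow_mul]; norm_num
  have hfac : (Nat.factorial n : ℝ) ≠ 0 := Nat.cast_ne_zero.2 (Nat.factorial_ne_zero n)
  have h4 : ((4:ℝ) ^ n) ≠ 0 := by positivity
  field_simp [h2] at h ⊢
  rw [h2] at h
  linarith [h]


lemma w_meas (γ : ℝ) : Measurable (wP γ) := by
  unfold wP; fun_prop

lemma w_nonneg (γ : ℝ) {t : ℝ} (ht : t ∈ Ioo (-1:ℝ) 1) : 0 ≤ wP γ t :=
  Real.rpow_nonneg (by nlinarith [ht.1, ht.2]) _

lemma w_integrable {γ : ℝ} (hγ : -(1/2) < γ) :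
    IntegrableOn (wP γ) (Ioo (-1:ℝ) 1) := by
  have := In_integrable hγ 0
  simpa using this

lemma KP_pos {γ : ℝ} (hγ : -(1/2) < γ) : 0 < KP γ :=
  div_pos (Real.Gamma_pos_of_pos (by linarith))
    (mul_pos (Real.sqrt_pos.2 Real.pi_pos) (Real.Gamma_pos_of_pos (by linarith)))

lemma intW_nonneg (γ : ℝ) : 0 ≤ ∫ t in Ioo (-1:ℝ) 1, wP γ t :=
  setIntegral_nonneg measurableSet_Ioo fun t ht => w_nonneg γ ht

lemma CP_nonneg {γ : ℝ} (hγ : -(1/2) < γ) : 0 ≤ CP γ :=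
  mul_nonneg (KP_pos hγ).le (intW_nonneg γ)

lemma cos_mul_w_eq (γ x t : ℝ) :
    Real.cos (x * t) * wP γ t
      = ∑' n : ℕ, ((-1:ℝ) ^ n * x ^ (2*n) / (Nat.factorial (2*n) : ℝ))
          * (t ^ (2*n) * wP γ t) := by
  rw [Real.cos_eq_tsum, ← tsum_mul_right]
  refine tsum_congr fun n => ?_
  rw [mul_pow]
  ring

lemma summable_coeff (x : ℝ) :
    Summable (fun n : ℕ => |x| ^ (2*n) / (Nat.factorial (2*n) : ℝ)) :=
  (Real.summable_pow_div_factorial |x|).comp_injective (fun a b h => by omega)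

lemma coeff_abs (x : ℝ) (n : ℕ) :
    |(-1:ℝ) ^ n * x ^ (2*n) / (Nat.factorial (2*n) : ℝ)|
      = |x| ^ (2*n) / (Nat.factorial (2*n) : ℝ) := by
  rw [abs_div, abs_mul, _root_.abs_pow, _root_.abs_pow, abs_neg, abs_one, one_pow, one_mul,
    Nat.abs_cast]

lemma integral_cos_w {γ : ℝ} (hγ : -(1/2) < γ) (x : ℝ) :
    (∫ t in Ioo (-1:ℝ) 1, Real.cos (x * t) * wP γ t)
      = ∑' n : ℕ, ((-1:ℝ) ^ n * x ^ (2*n) / (Nat.factorial (2*n) : ℝ))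
          * (Real.Gamma ((n:ℝ) + 1/2) * Real.Gamma (γ + 1/2) / Real.Gamma ((n:ℝ) + γ + 1)) := by
  have hB : (∫⁻ t in Ioo (-1:ℝ) 1, (‖wP γ t‖₊ : ℝ≥0∞)) < ⊤ := (w_integrable hγ).2
  have hle : ∀ n : ℕ, (∫⁻ t in Ioo (-1:ℝ) 1, (‖t ^ (2*n) * wP γ t‖₊ : ℝ≥0∞))
      ≤ ∫⁻ t in Ioo (-1:ℝ) 1, (‖wP γ t‖₊ : ℝ≥0∞) := by
    intro n
    refine lintegral_mono_ae ?_
    filter_upwards [ae_restrict_mem measurableSet_Ioo] with t ht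
    refine ENNReal.coe_le_coe.2 ?_
    have h1 : |t ^ (2*n) * wP γ t| ≤ |wP γ t| := by
      rw [abs_mul]
      have : |t ^ (2*n)| ≤ 1 := by
        rw [_root_.abs_pow]
        exact pow_le_one₀ (abs_nonneg t) (abs_le.2 ⟨ht.1.le, ht.2.le⟩)
      nlinarith [abs_nonneg (wP γ t), abs_nonneg (t ^ (2*n))]
    have h2 : ‖t ^ (2*n) * wP γ t‖ ≤ ‖wP γ t‖ := by rwa [Real.norm_eq_abs, Real.norm_eq_abs]
    exact_mod_cast h2
  set c : ℕ → ℝ := fun n => (-1:ℝ) ^ n * x ^ (2*n) / (Nat.factorial (2*n) : ℝ) with hc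
  have hfact : ∀ n : ℕ, (∫⁻ t in Ioo (-1:ℝ) 1, (‖c n * (t ^ (2*n) * wP γ t)‖₊ : ℝ≥0∞))
      = (‖c n‖₊ : ℝ≥0∞) * ∫⁻ t in Ioo (-1:ℝ) 1, (‖t ^ (2*n) * wP γ t‖₊ : ℝ≥0∞) := by
    intro n
    rw [← lintegral_const_mul' _ _ ENNReal.coe_ne_top]
    simp_rw [← ENNReal.coe_mul, ← nnnorm_mul]
  have hsum : (∑' n : ℕ, (‖c n‖₊ : ℝ≥0∞)) ≠ ⊤ := by
    rw [ENNReal.tsum_coe_ne_top_iff_summable]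
    rw [← NNReal.summable_coe]
    simpa [hc, coe_nnnorm, Real.norm_eq_abs, coeff_abs] using summable_coeff x
  have hf' : (∑' n : ℕ, ∫⁻ t in Ioo (-1:ℝ) 1, (‖c n * (t ^ (2*n) * wP γ t)‖₊ : ℝ≥0∞)) ≠ ⊤ := by
    have hb : (∑' n : ℕ, (‖c n‖₊ : ℝ≥0∞) * ∫⁻ t in Ioo (-1:ℝ) 1, (‖wP γ t‖₊ : ℝ≥0∞)) ≠ ⊤ := by
      rw [ENNReal.tsum_mul_right]
      exact ENNReal.mul_ne_top hsum hB.ne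
    refine ne_top_of_le_ne_top hb (ENNReal.tsum_le_tsum fun n => ?_)
    rw [hfact n]
    exact mul_le_mul_right (hle n) _
  have hswap := MeasureTheory.integral_tsum (μ := volume.restrict (Ioo (-1:ℝ) 1))
    (f := fun n t => c n * (t ^ (2*n) * wP γ t))
    (fun n => (((In_integrable hγ n).const_mul (c n))).aestronglyMeasurable) hf'
  calc (∫ t in Ioo (-1:ℝ) 1, Real.cos (x * t) * wP γ t)
      = ∫ t in Ioo (-1:ℝ) 1, ∑' n : ℕ, c n * (t ^ (2*n) * wP γ t) := by
        simp_rw [cos_mul_w_eq γ x]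
        rfl
    _ = ∑' n : ℕ, ∫ t in Ioo (-1:ℝ) 1, c n * (t ^ (2*n) * wP γ t) := hswap
    _ = ∑' n : ℕ, c n * (Real.Gamma ((n:ℝ) + 1/2) * Real.Gamma (γ + 1/2)
          / Real.Gamma ((n:ℝ) + γ + 1)) := by
        refine tsum_congr fun n => ?_
        rw [integral_const_mul, In_eq hγ n]

lemma scalar_id (G1 Gh Gn sp fn f2n Q s X : ℝ) (hp : sp ≠ 0) (hGh : Gh ≠ 0) (hGn : Gn ≠ 0)
    (hfn : fn ≠ 0) (hf2n : f2n ≠ 0) (hQ : Q ≠ 0) :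
    G1 * (s * (X / Q) / (fn * Gn))
      = G1 / (sp * Gh) * (s * X / f2n * (f2n * sp / (Q * fn) * Gh / Gn)) := by
  field_simp

lemma besselJ_rep {γ : ℝ} (hγ : -(1/2) < γ) (x : ℝ) :
    normBesselJ γ x = KP γ * ∫ t in Ioo (-1:ℝ) 1, Real.cos (x * t) * wP γ t := by
  rw [integral_cos_w hγ x, normBesselJ, ← tsum_mul_left, ← tsum_mul_left]
  refine tsum_congr fun n => ?_
  have hπ : Real.sqrt Real.pi ≠ 0 := ne_of_gt (Real.sqrt_pos.2 Real.pi_pos)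
  have hG1 : Real.Gamma (γ + 1/2) ≠ 0 := (Real.Gamma_pos_of_pos (by linarith)).ne'
  have hn0 : (0:ℝ) ≤ (n:ℝ) := Nat.cast_nonneg n
  have hG2 : Real.Gamma ((n:ℝ) + γ + 1) ≠ 0 :=
    (Real.Gamma_pos_of_pos (by linarith)).ne'
  have hfn : (Nat.factorial n : ℝ) ≠ 0 := Nat.cast_ne_zero.2 (Nat.factorial_ne_zero n)
  have hf2n : (Nat.factorial (2*n) : ℝ) ≠ 0 := Nat.cast_ne_zero.2 (Nat.factorial_ne_zero _)
  have h4 : ((4:ℝ) ^ n) ≠ 0 := by positivity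
  have hx2 : (x / 2) ^ (2*n) = x ^ (2*n) / 4 ^ n := by
    rw [div_pow]
    congr 1
    rw [pow_mul]
    norm_num
  rw [KP, Gamma_nat_add_half, hx2]
  exact scalar_id _ _ _ _ _ _ _ _ _ hπ hG1 hG2 hfn hf2n h4

lemma cos_w_integrable {γ : ℝ} (hγ : -(1/2) < γ) (x : ℝ) :
    IntegrableOn (fun t => Real.cos (x * t) * wP γ t) (Ioo (-1:ℝ) 1) := by
  refine Integrable.mono' (w_integrable hγ) ?_ ?_
  · exact ((Real.continuous_cos.comp (continuous_const.mul continuous_id)).aestronglyMeasurable).mul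
      (w_meas γ).aestronglyMeasurable
  · filter_upwards [ae_restrict_mem measurableSet_Ioo] with t ht
    rw [Real.norm_eq_abs, abs_mul, _root_.abs_of_nonneg (w_nonneg γ ht)]
    exact mul_le_of_le_one_left (w_nonneg γ ht) (Real.abs_cos_le_one _)

lemma besselJ_abs_le {γ : ℝ} (hγ : -(1/2) < γ) (x : ℝ) :
    |normBesselJ γ x| ≤ CP γ := by
  rw [besselJ_rep hγ x, CP, abs_mul, abs_of_pos (KP_pos hγ)]
  refine mul_le_mul_of_nonneg_left ?_ (KP_pos hγ).le
  calc |∫ t in Ioo (-1:ℝ) 1, Real.cos (x * t) * wP γ t|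
      ≤ ∫ t in Ioo (-1:ℝ) 1, wP γ t := by
        refine norm_integral_le_of_norm_le (f := fun t => Real.cos (x * t) * wP γ t)
          (w_integrable hγ) ?_
        filter_upwards [ae_restrict_mem measurableSet_Ioo] with t ht
        rw [Real.norm_eq_abs, abs_mul, _root_.abs_of_nonneg (w_nonneg γ ht)]
        exact mul_le_of_le_one_left (w_nonneg γ ht) (Real.abs_cos_le_one _)

lemma cos_sub_abs_le (a b : ℝ) : |Real.cos a - Real.cos b| ≤ |a - b| := by
  rw [Real.cos_sub_cos, abs_mul, abs_mul]
  have h1 : |(-2:ℝ)| = 2 := by norm_num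
  have h2 : |Real.sin ((a + b) / 2)| ≤ 1 := Real.abs_sin_le_one _
  have h3 : |Real.sin ((a - b) / 2)| ≤ |(a - b) / 2| := Real.abs_sin_le_abs
  have h4 : |(a - b) / 2| = |a - b| / 2 := by
    rw [abs_div]
    norm_num
  rw [h1]
  nlinarith [abs_nonneg (Real.sin ((a - b) / 2)), abs_nonneg (Real.sin ((a + b) / 2)),
    abs_nonneg (a - b)]

lemma besselJ_lip {γ : ℝ} (hγ : -(1/2) < γ) (x y : ℝ) :
    |normBesselJ γ x - normBesselJ γ y| ≤ CP γ * |x - y| := by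
  rw [besselJ_rep hγ x, besselJ_rep hγ y, ← mul_sub,
    ← integral_sub (cos_w_integrable hγ x) (cos_w_integrable hγ y)]
  simp_rw [← sub_mul]
  rw [abs_mul, abs_of_pos (KP_pos hγ), CP, mul_assoc, mul_comm (∫ t in Ioo (-1:ℝ) 1, wP γ t) |x - y|]
  refine mul_le_mul_of_nonneg_left ?_ (KP_pos hγ).le
  calc |∫ t in Ioo (-1:ℝ) 1, (Real.cos (x * t) - Real.cos (y * t)) * wP γ t|
      ≤ ∫ t in Ioo (-1:ℝ) 1, |x - y| * wP γ t := by
        refine norm_integral_le_of_norm_le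
          (f := fun t => (Real.cos (x * t) - Real.cos (y * t)) * wP γ t)
          ((w_integrable hγ).const_mul |x - y|) ?_
        filter_upwards [ae_restrict_mem measurableSet_Ioo] with t ht
        rw [Real.norm_eq_abs, abs_mul, _root_.abs_of_nonneg (w_nonneg γ ht)]
        refine mul_le_mul_of_nonneg_right ?_ (w_nonneg γ ht)
        calc |Real.cos (x * t) - Real.cos (y * t)| ≤ |x * t - y * t| := cos_sub_abs_le _ _
          _ = |x - y| * |t| := by rw [← sub_mul, abs_mul]
          _ ≤ |x - y| * 1 := by
              gcongr
              exact abs_le.2 ⟨ht.1.le, ht.2.le⟩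
          _ = |x - y| := mul_one _
    _ = |x - y| * ∫ t in Ioo (-1:ℝ) 1, wP γ t := integral_const_mul _ _

lemma besselJ_continuous {γ : ℝ} (hγ : -(1/2) < γ) : Continuous (normBesselJ γ) := by
  have hC : 0 ≤ CP γ := CP_nonneg hγ
  refine LipschitzWith.continuous (K := ⟨CP γ, hC⟩) ?_
  refine LipschitzWith.of_dist_le_mul fun x y => ?_
  rw [Real.dist_eq, Real.dist_eq]
  exact_mod_cast besselJ_lip hγ x y

end QPAux

end PoissonAux

/-- continuity of the quadratic-phase Fourier–Bessel transform
of an `L¹_γ` function on `[0,∞)`. -/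
theorem qpFB_continuousOn (a b c d e γ : ℝ) (hb : b ≠ 0) (hγ : γ > -(1 / 2))
    (h : ℝ → ℂ) (hh : MemLp h 1 (muGamma γ)) :
    ContinuousOn (qpFB a b c d e γ h) (Ici (0 : ℝ)) := by
  have hγ' : -(1/2) < γ := hγ
  have hInt0 : Integrable h (muGamma γ) := memLp_one_iff_integrable.mp hh
  have hmg : muGamma γ = (volume.restrict (Ioi (0:ℝ))).withDensity
      (fun s => ((Real.toNNReal (s ^ (2*γ+1)) : NNReal) : ℝ≥0∞)) := rfl
  rw [hmg] at hInt0
  have hdens : AEMeasurable (fun s : ℝ => Real.toNNReal (s ^ (2*γ+1)))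
      (volume.restrict (Ioi (0:ℝ))) := by
    apply Measurable.aemeasurable
    fun_prop
  have hG : Integrable (fun s => Real.toNNReal (s ^ (2*γ+1)) • h s)
      (volume.restrict (Ioi (0:ℝ))) :=
    (integrable_withDensity_iff_integrable_smul₀ hdens).mp hInt0
  set Φ : ℝ → ℂ := fun s => Real.toNNReal (s ^ (2*γ+1)) • h s with hΦ
  have hker_right : ∀ t : ℝ, Continuous (fun s => qpKernel a b c d e γ t s) := by
    intro t
    unfold qpKernel
    refine Continuous.mul ?_ ?_
    · exact Complex.continuous_exp.comp
        (continuous_const.mul (Complex.continuous_ofReal.comp (by fun_prop)))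
    · exact Complex.continuous_ofReal.comp
        ((QPAux.besselJ_continuous hγ').comp (by fun_prop))
  have hker_left : ∀ s : ℝ, Continuous (fun t => qpKernel a b c d e γ t s) := by
    intro s
    unfold qpKernel
    refine Continuous.mul ?_ ?_
    · exact Complex.continuous_exp.comp
        (continuous_const.mul (Complex.continuous_ofReal.comp (by fun_prop)))
    · exact Complex.continuous_ofReal.comp
        ((QPAux.besselJ_continuous hγ').comp (by fun_prop))
  have hkernel_norm : ∀ t s : ℝ, ‖qpKernel a b c d e γ t s‖ ≤ QPAux.CP γ := by
    intro t s
    rw [qpKernel, norm_mul]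
    have h1 : ‖Complex.exp (-Complex.I * ((a * s ^ 2 + c * t ^ 2 + d * s + e * t : ℝ) : ℂ))‖
        = 1 := by
      rw [Complex.norm_exp]
      simp [← Complex.ofReal_pow]
    rw [h1, one_mul, Complex.norm_real, Real.norm_eq_abs]
    exact QPAux.besselJ_abs_le hγ' _
  have key : ContinuousOn (fun t => ∫ s in Ioi (0:ℝ), qpKernel a b c d e γ t s * Φ s)
      (Ici (0:ℝ)) := by
    refine continuousOn_of_dominated (bound := fun s => QPAux.CP γ * ‖Φ s‖) ?_ ?_ ?_ ?_
    · intro t _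
      exact (hker_right t).aestronglyMeasurable.mul hG.1
    · intro t _
      filter_upwards with s
      rw [norm_mul]
      exact mul_le_mul_of_nonneg_right (hkernel_norm t s) (norm_nonneg _)
    · exact hG.norm.const_mul _
    · filter_upwards with s
      exact ((hker_left s).mul continuous_const).continuousOn
  have heq : qpFB a b c d e γ h = fun t =>
      (((cGamma γ : ℝ) : ℂ) / (Complex.I * (b:ℂ)) ^ ((γ:ℂ)+1))
        * ∫ s in Ioi (0:ℝ), qpKernel a b c d e γ t s * Φ s := by
    funext t
    rw [qpFB]
    congr 1
    refine integral_congr_ae ?_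
    filter_upwards [ae_restrict_mem measurableSet_Ioi] with s hs
    have hs' : (0:ℝ) ≤ s ^ (2*γ+1) := Real.rpow_nonneg (le_of_lt hs) _
    simp only [hΦ, NNReal.smul_def, Real.coe_toNNReal _ hs', Complex.real_smul]
    ring
  rw [heq]
  exact continuousOn_const.mul key
end

section
/- (Scaling) Let a, b, c, d, e be real numbers with b ≠ 0, let γ > -1/2, let k > 0, and let h ∈ L¹_γ(ℝ₊). Then for every t ∈ [0,∞), B^{a,b,c}_{d,e,γ}[h](k t) = k^{-(2γ+2)} · B^{a',b,c'}_{d',e',γ}[h_k](t), where a' = a/k², c' = c k², d' = d/k, e' = e k, and h_k(u) = h(u/k). -/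
open MeasureTheory Set Complex ENNReal

/-- Scaling: behaviour of the quadratic-phase Fourier–Bessel transform under
dilations. -/
theorem qpFB_scaling (a b c d e γ k : ℝ) (hb : b ≠ 0) (hγ : γ > -(1 / 2)) (hk : 0 < k)
    (h : ℝ → ℂ) (hh : MemLp h 1 (muGamma γ)) :
    ∀ t ∈ Ici (0 : ℝ),
      qpFB a b c d e γ h (k * t) =
        ((k ^ (-(2 * γ + 2)) : ℝ) : ℂ) *
          qpFB (a / k ^ 2) b (c * k ^ 2) (d / k) (e * k) γ (fun u => h (u / k)) t := by
  intro t ht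
  have hk0 : k ≠ 0 := hk.ne'
  unfold qpFB
  set G : ℝ → ℂ := fun s => qpKernel (a / k ^ 2) b (c * k ^ 2) (d / k) (e * k) γ t s *
      h (s / k) * ((s ^ (2 * γ + 1) : ℝ) : ℂ) with hG
  have hcomp := integral_comp_mul_left_Ioi G 0 hk
  simp only [mul_zero] at hcomp
  have key : (∫ s in Ioi (0:ℝ), G s)
      = ((k ^ (2 * γ + 2) : ℝ) : ℂ) *
        ∫ s in Ioi (0:ℝ), qpKernel a b c d e γ (k * t) s * h s * ((s ^ (2 * γ + 1) : ℝ) : ℂ) := by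
    have hGx : ∀ x ∈ Ioi (0:ℝ), G (k * x)
        = ((k ^ (2 * γ + 1) : ℝ) : ℂ) *
          (qpKernel a b c d e γ (k * t) x * h x * ((x ^ (2 * γ + 1) : ℝ) : ℂ)) := by
      intro x hx
      have hx0 : (0:ℝ) < x := hx
      have harg : (a / k ^ 2) * (k * x) ^ 2 + (c * k ^ 2) * t ^ 2 + (d / k) * (k * x)
          + (e * k) * t = a * x ^ 2 + c * (k * t) ^ 2 + d * x + e * (k * t) := by
        field_simp
      have hj : (k * x) * t / b = x * (k * t) / b := by ring
      have hpow : ((k * x) ^ (2 * γ + 1) : ℝ) = k ^ (2 * γ + 1) * x ^ (2 * γ + 1) :=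
        Real.mul_rpow hk.le hx0.le
      have hdiv : k * x / k = x := by field_simp
      simp only [hG, qpKernel, harg, hj, hpow, hdiv]
      push_cast
      ring
    have : (∫ x in Ioi (0:ℝ), G (k * x))
        = ∫ x in Ioi (0:ℝ), ((k ^ (2 * γ + 1) : ℝ) : ℂ) *
            (qpKernel a b c d e γ (k * t) x * h x * ((x ^ (2 * γ + 1) : ℝ) : ℂ)) :=
      setIntegral_congr_fun measurableSet_Ioi hGx
    rw [this, MeasureTheory.integral_const_mul] at hcomp
    have hsolve : (∫ x in Ioi (0:ℝ), G x)
        = (k:ℂ) * (((k ^ (2 * γ + 1) : ℝ) : ℂ) *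
            ∫ x in Ioi (0:ℝ), qpKernel a b c d e γ (k * t) x * h x * ((x ^ (2 * γ + 1) : ℝ) : ℂ)) := by
      rw [hcomp, Complex.real_smul, ← mul_assoc]
      push_cast
      rw [mul_inv_cancel₀ (by exact_mod_cast hk0), one_mul]
    have hsplit : (k:ℝ) ^ (2 * γ + 2) = k ^ (2 * γ + 1) * k := by
      have h2 := Real.rpow_add hk (2 * γ + 1) 1
      rw [Real.rpow_one] at h2
      rw [show 2 * γ + 2 = 2 * γ + 1 + 1 by ring, h2]
    rw [hsolve, hsplit]
    push_cast
    ring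
  rw [key]
  have hK : (((k ^ (2 * γ + 2) : ℝ)) : ℂ) ≠ 0 := by
    exact_mod_cast (Real.rpow_pos_of_pos hk _).ne'
  have hneg : ((k ^ (-(2 * γ + 2)) : ℝ) : ℂ) = (((k ^ (2 * γ + 2) : ℝ)) : ℂ)⁻¹ := by
    rw [Real.rpow_neg hk.le]; push_cast; rfl
  rw [hneg]
  apply mul_left_cancel₀ hK
  conv_rhs => rw [← mul_assoc, mul_inv_cancel₀ hK, one_mul]
  ring
end

section
/- For γ > -1/2 and all s, t > 0, the kernel W_γ of the Fourier–Bessel translation satisfies ∫₀^∞ W_γ(s,t,u) u^{2γ+1} du = 1. -/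
open MeasureTheory Set Complex ENNReal

lemma beta_real {p : ℝ} (hp : 0 < p) :
    ∫ x in Ioo (0:ℝ) 1, x ^ (p - 1) * (1 - x) ^ (p - 1) =
      Real.Gamma p * Real.Gamma p / Real.Gamma (2 * p) := by
  have hp' : 0 < (p:ℂ).re := by simpa using hp
  have hB : Complex.betaIntegral (p:ℂ) (p:ℂ) =
      ((∫ x in Ioo (0:ℝ) 1, x ^ (p - 1) * (1 - x) ^ (p - 1) : ℝ) : ℂ) := by
    rw [Complex.betaIntegral, intervalIntegral.integral_of_le (by norm_num : (0:ℝ) ≤ 1),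
      ← Measure.restrict_congr_set Ioo_ae_eq_Ioc]
    calc ∫ x in Ioo (0:ℝ) 1, (x:ℂ) ^ ((p:ℂ) - 1) * (1 - (x:ℂ)) ^ ((p:ℂ) - 1)
        = ∫ x in Ioo (0:ℝ) 1, ((x ^ (p - 1) * (1 - x) ^ (p - 1) : ℝ) : ℂ) := by
          refine setIntegral_congr_fun measurableSet_Ioo fun x hx => ?_
          obtain ⟨h0, h1⟩ := hx
          rw [show ((p:ℂ) - 1) = ((p - 1 : ℝ) : ℂ) by push_cast; ring,
            show (1 - (x:ℂ)) = ((1 - x : ℝ) : ℂ) by push_cast; ring,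
            ← Complex.ofReal_cpow h0.le, ← Complex.ofReal_cpow (by linarith),
            Complex.ofReal_mul]
      _ = _ := integral_ofReal
  have key := Complex.Gamma_mul_Gamma_eq_betaIntegral hp' hp'
  rw [hB, ← Complex.ofReal_add, Complex.Gamma_ofReal, Complex.Gamma_ofReal,
    show ((p:ℝ) + p) = 2 * p by ring, ← Complex.ofReal_mul, ← Complex.ofReal_mul] at key
  have h := Complex.ofReal_inj.mp key
  have h2p : Real.Gamma (2 * p) ≠ 0 := (Real.Gamma_pos_of_pos (by linarith)).ne'
  field_simp
  rw [mul_comm 2 p] at h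
  linarith [h]

set_option maxHeartbeats 2000000 in
/-- the Fourier–Bessel translation kernel `W_γ` has total weighted
integral equal to 1. -/
theorem Wker_integral_eq_one (γ : ℝ) (hγ : γ > -(1 / 2)) :
    ∀ s ∈ Ioi (0 : ℝ), ∀ t ∈ Ioi (0 : ℝ),
      ∫ u in Ioi (0 : ℝ), Wker γ s t u * u ^ (2 * γ + 1) = 1 := by
  intro s hs t ht
  rw [mem_Ioi] at hs ht
  set a : ℝ := |s - t| with ha_def
  set b : ℝ := s + t with hb_def
  have ha0 : 0 ≤ a := abs_nonneg _
  have hab : a < b := by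
    rw [ha_def, hb_def, abs_lt]; constructor <;> linarith
  set C : ℝ := (2 : ℝ) ^ (2 * γ - 1) * Real.Gamma (γ + 1) /
      (Real.sqrt Real.pi * Real.Gamma (γ + 1 / 2)) with hC_def
  set c1 : ℝ := C * (1/4 : ℝ) ^ (2 * γ - 1) / (s * t) ^ (2 * γ) / 2 with hc1_def
  set G : ℝ → ℝ := fun v => ((b ^ 2 - v) * (v - a ^ 2)) ^ (γ - 1/2) with hG_def
  set F : ℝ → ℝ := fun u => Wker γ s t u * u ^ (2 * γ + 1) with hF_def
  -- Step A: restrict to Ioo a b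
  have hb0 : 0 < b := lt_of_le_of_lt ha0 hab
  have stepA : ∫ u in Ioi (0:ℝ), F u = ∫ u in Ioo a b, F u := by
    have hcond : ∀ u : ℝ, F u = (Icc a b).indicator F u := by
      intro u
      by_cases h : u ∈ Icc a b
      · rw [indicator_of_mem h]
      · rw [indicator_of_notMem h, hF_def]
        simp only
        rw [Wker, if_neg (by rw [mem_Icc] at h; exact fun hc => h ⟨hc.1, hc.2⟩), zero_mul]
    calc ∫ u in Ioi (0:ℝ), F u
        = ∫ u in Ioi (0:ℝ), (Icc a b).indicator F u :=
          setIntegral_congr_fun measurableSet_Ioi fun u _ => hcond u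
      _ = ∫ u in Ioi (0:ℝ) ∩ Icc a b, F u := setIntegral_indicator measurableSet_Icc
      _ = ∫ u in Ioo a b, F u := by
          apply setIntegral_congr_set
          have h1 : (Icc a b : Set ℝ) =ᵐ[volume] Ioo a b := Ioo_ae_eq_Icc.symm
          have h2 := MeasureTheory.ae_eq_set_inter
            (MeasureTheory.ae_eq_refl (μ := (volume : Measure ℝ)) (Ioi (0:ℝ))) h1
          have h3 : Ioi (0:ℝ) ∩ Ioo a b = Ioo a b :=
            inter_eq_right.mpr (fun u hu => lt_of_le_of_lt ha0 hu.1)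
          rwa [h3] at h2
  -- Step B: pointwise formula on Ioo a b
  have stepB : ∀ u ∈ Ioo a b, F u = c1 * (|2 * u| • G (u ^ 2)) := by
    rintro u ⟨hu1, hu2⟩
    have hu0 : 0 < u := lt_of_le_of_lt ha0 hu1
    have hcond : |s - t| ≤ u ∧ u ≤ s + t := ⟨le_of_lt hu1, le_of_lt hu2⟩
    have hP1 : 0 < b ^ 2 - u ^ 2 := by nlinarith
    have hP2 : 0 < u ^ 2 - a ^ 2 := by nlinarith
    have hPpos : 0 < (b ^ 2 - u ^ 2) * (u ^ 2 - a ^ 2) := mul_pos hP1 hP2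
    have hprod : (s + t + u) * (s + t - u) * (s - t + u) * (t + u - s)
        = (b ^ 2 - u ^ 2) * (u ^ 2 - a ^ 2) := by
      have h1 : a ^ 2 = (s - t) ^ 2 := sq_abs _
      rw [h1, hb_def]; ring
    have hW : Wker γ s t u
        = C * (1 / 4 * Real.sqrt ((b ^ 2 - u ^ 2) * (u ^ 2 - a ^ 2))) ^ (2 * γ - 1)
          / (s * t * u) ^ (2 * γ) := by
      rw [Wker, if_pos hcond, triArea, hprod, ← hC_def]
    have e1 : (1 / 4 * Real.sqrt ((b ^ 2 - u ^ 2) * (u ^ 2 - a ^ 2))) ^ (2 * γ - 1)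
        = (1 / 4 : ℝ) ^ (2 * γ - 1)
          * ((b ^ 2 - u ^ 2) * (u ^ 2 - a ^ 2)) ^ (γ - 1 / 2) := by
      rw [Real.mul_rpow (by norm_num) (Real.sqrt_nonneg _), Real.sqrt_eq_rpow,
        ← Real.rpow_mul hPpos.le]
      congr 1
      ring
    have e2 : (s * t * u) ^ (2 * γ) = (s * t) ^ (2 * γ) * u ^ (2 * γ) :=
      Real.mul_rpow (by positivity) hu0.le
    have e3 : u ^ (2 * γ + 1) = u ^ (2 * γ) * u := by
      rw [Real.rpow_add hu0, Real.rpow_one]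
    have hstne : ((s * t : ℝ) ^ (2 * γ)) ≠ 0 := by positivity
    have hune : ((u : ℝ) ^ (2 * γ)) ≠ 0 := by positivity
    rw [hF_def]
    simp only
    rw [hW, e1, e2, e3, hc1_def, hG_def]
    simp only [smul_eq_mul, abs_of_pos (by linarith : (0:ℝ) < 2 * u)]
    field_simp
  -- Step C: substitution v = u^2
  have himg : (fun u : ℝ => u ^ 2) '' Ioo a b = Ioo (a ^ 2) (b ^ 2) := by
    ext v
    simp only [mem_image, mem_Ioo]
    constructor
    · rintro ⟨u, ⟨h1, h2⟩, rfl⟩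
      have hu0 : 0 < u := lt_of_le_of_lt ha0 h1
      exact ⟨by nlinarith, by nlinarith⟩
    · rintro ⟨h1, h2⟩
      have hv0 : 0 ≤ v := le_trans (sq_nonneg a) h1.le
      refine ⟨Real.sqrt v, ⟨?_, ?_⟩, Real.sq_sqrt hv0⟩
      · have := Real.sqrt_lt_sqrt (sq_nonneg a) h1
        rwa [Real.sqrt_sq ha0] at this
      · have := Real.sqrt_lt_sqrt hv0 h2
        rwa [Real.sqrt_sq hb0.le] at this
  have stepC : ∫ v in Ioo (a^2) (b^2), G v = ∫ u in Ioo a b, |2 * u| • G (u ^ 2) := by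
    rw [← himg]
    exact integral_image_eq_integral_abs_deriv_smul measurableSet_Ioo
      (fun x _ => by simpa using (hasDerivAt_pow 2 x).hasDerivWithinAt)
      (fun x hx y hy h => by
        have hx0 : 0 < x := lt_of_le_of_lt ha0 hx.1
        have hy0 : 0 < y := lt_of_le_of_lt ha0 hy.1
        nlinarith [sq_nonneg (x - y), sq_nonneg (x + y)]) G
  -- Step D: affine substitution
  set D : ℝ := b ^ 2 - a ^ 2 with hD_def
  have hD4 : D = 4 * (s * t) := by
    have h1 : |s - t| ^ 2 = (s - t) ^ 2 := sq_abs _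
    rw [hD_def, ha_def, hb_def, h1]; ring
  have hDpos : 0 < D := by rw [hD4]; positivity
  have himg2 : (fun w : ℝ => a ^ 2 + D * w) '' Ioo 0 1 = Ioo (a ^ 2) (b ^ 2) := by
    ext v
    simp only [mem_image, mem_Ioo]
    constructor
    · rintro ⟨w, ⟨h1, h2⟩, rfl⟩
      have : D = b ^ 2 - a ^ 2 := hD_def
      constructor <;> nlinarith
    · rintro ⟨h1, h2⟩
      refine ⟨(v - a ^ 2) / D, ⟨div_pos (by linarith) hDpos, (div_lt_one hDpos).mpr ?_⟩, ?_⟩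
      · rw [hD_def]; linarith
      · rw [mul_comm, div_mul_cancel₀ _ hDpos.ne']; ring
  have stepD : ∫ v in Ioo (a^2) (b^2), G v
      = ∫ w in Ioo (0:ℝ) 1, |D| • G (a ^ 2 + D * w) := by
    rw [← himg2]
    exact integral_image_eq_integral_abs_deriv_smul measurableSet_Ioo
      (fun x _ => by
        simpa using ((hasDerivAt_id x).const_mul D).hasDerivWithinAt)
      (fun x _ y _ h => by
        have h' : D * x = D * y := by linarith
        exact mul_left_cancel₀ hDpos.ne' h') G
  -- Step E: evaluate integrand
  have stepE : ∀ w ∈ Ioo (0:ℝ) 1,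
      |D| • G (a ^ 2 + D * w) = D ^ (2*γ - 1) * D * (w ^ (γ - 1/2) * (1 - w) ^ (γ - 1/2)) := by
    rintro w ⟨hw1, hw2⟩
    have h1 : b ^ 2 - (a ^ 2 + D * w) = D * (1 - w) := by rw [hD_def]; ring
    have h2 : (a ^ 2 + D * w) - a ^ 2 = D * w := by ring
    rw [smul_eq_mul, abs_of_pos hDpos, hG_def]
    simp only
    rw [h1, h2, show (D * (1 - w)) * (D * w) = D ^ 2 * (w * (1 - w)) by ring,
      Real.mul_rpow (sq_nonneg D) (by nlinarith),
      ← Real.rpow_natCast D 2, ← Real.rpow_mul hDpos.le,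
      Real.mul_rpow hw1.le (by linarith),
      show ((2:ℕ):ℝ) * (γ - 1/2) = 2 * γ - 1 by push_cast; ring]
    ring
  -- assemble
  have hg1 : 0 < Real.Gamma (γ + 1/2) := Real.Gamma_pos_of_pos (by linarith)
  have hg2 : 0 < Real.Gamma (γ + 1) := Real.Gamma_pos_of_pos (by linarith)
  have hg3 : 0 < Real.Gamma (2 * γ + 1) := Real.Gamma_pos_of_pos (by linarith)
  have hπ : 0 < Real.sqrt Real.pi := Real.sqrt_pos.mpr Real.pi_pos
  have hst : 0 < s * t := mul_pos hs ht
  have dup := Real.Gamma_mul_Gamma_add_half (γ + 1/2)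
  rw [show γ + 1/2 + 1/2 = γ + 1 by ring, show 2 * (γ + 1/2) = 2 * γ + 1 by ring,
    show 1 - (2 * γ + 1) = -(2 * γ) by ring] at dup
  have e4 : D ^ (2 * γ - 1) = (4:ℝ) ^ (2 * γ - 1) * (s * t) ^ (2 * γ - 1) := by
    rw [hD4, Real.mul_rpow (by norm_num) hst.le]
  have e5 : ((1:ℝ)/4) ^ (2 * γ - 1) = ((4:ℝ) ^ (2 * γ - 1))⁻¹ := by
    rw [one_div, Real.inv_rpow (by norm_num)]
  have e6 : (s * t) ^ (2 * γ) = (s * t) ^ (2 * γ - 1) * (s * t) := by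
    rw [show (2 * γ) = (2 * γ - 1) + 1 by ring, Real.rpow_add_one hst.ne']
    norm_num
  have hXY : (2:ℝ) ^ (2 * γ - 1) * (2:ℝ) ^ (-(2 * γ)) = 1/2 := by
    rw [← Real.rpow_add two_pos, show (2 * γ - 1) + -(2 * γ) = -1 by ring,
      Real.rpow_neg_one]
    norm_num
  have h4ne : ((4:ℝ) ^ (2 * γ - 1)) ≠ 0 := by positivity
  have hstne : ((s * t : ℝ) ^ (2 * γ - 1)) ≠ 0 := by positivity
  calc ∫ u in Ioi (0:ℝ), F u
      = ∫ u in Ioo a b, c1 * (|2 * u| • G (u ^ 2)) := by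
        rw [stepA]; exact setIntegral_congr_fun measurableSet_Ioo stepB
    _ = c1 * ∫ u in Ioo a b, |2 * u| • G (u ^ 2) := by
        simp_rw [smul_eq_mul]
        rw [MeasureTheory.integral_const_mul]
    _ = c1 * ∫ v in Ioo (a ^ 2) (b ^ 2), G v := by rw [stepC]
    _ = c1 * ∫ w in Ioo (0:ℝ) 1, |D| • G (a ^ 2 + D * w) := by rw [stepD]
    _ = c1 * ∫ w in Ioo (0:ℝ) 1,
          D ^ (2*γ - 1) * D * (w ^ (γ - 1/2) * (1 - w) ^ (γ - 1/2)) := by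
        rw [setIntegral_congr_fun measurableSet_Ioo stepE]
    _ = c1 * (D ^ (2*γ - 1) * D *
          ∫ w in Ioo (0:ℝ) 1, w ^ (γ - 1/2) * (1 - w) ^ (γ - 1/2)) := by
        rw [MeasureTheory.integral_const_mul]
    _ = c1 * (D ^ (2*γ - 1) * D *
          (Real.Gamma (γ + 1/2) * Real.Gamma (γ + 1/2) / Real.Gamma (2 * (γ + 1/2)))) := by
        rw [show (γ - 1/2) = (γ + 1/2) - 1 by ring, beta_real (by linarith)]
    _ = 1 := by
        rw [show 2 * (γ + 1/2) = 2 * γ + 1 by ring, hc1_def, hC_def, e4, e5, e6, hD4]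
        set g1 := Real.Gamma (γ + 1/2) with hg1d
        set g2 := Real.Gamma (γ + 1) with hg2d
        set g3 := Real.Gamma (2 * γ + 1) with hg3d
        set P := Real.sqrt Real.pi with hPd
        set X := (2:ℝ) ^ (2 * γ - 1) with hXd
        set Y := (2:ℝ) ^ (-(2 * γ)) with hYd
        set Q := (4:ℝ) ^ (2 * γ - 1) with hQd
        set R := (s * t) ^ (2 * γ - 1) with hRd
        have hg1ne : g1 ≠ 0 := hg1.ne'
        have hg3ne : g3 ≠ 0 := hg3.ne'
        have hPne : P ≠ 0 := hπ.ne'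
        field_simp
        linear_combination (4 * X) * dup + (4 * g3 * P) * hXY
end

section
/- Let a, b, d be real numbers with b ≠ 0, let γ > -1/2, let 1 ≤ p ≤ ∞, and let h ∈ L^p_γ(ℝ₊). Then for every t ∈ (0,∞), the function s ↦ T^{a,b,d}_{t,γ}[h](s) belongs to L^p_γ(ℝ₊) and ‖T^{a,b,d}_{t,γ}[h]‖_{γ,p} ≤ ‖h‖_{γ,p}. -/
open MeasureTheory Set Complex ENNReal

namespace QPT

open Real MeasureTheory Set

/-- The constant appearing in `Wker`. -/
noncomputable def Kc (γ : ℝ) : ℝ :=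
  (2 : ℝ) ^ (2 * γ - 1) * Real.Gamma (γ + 1) / (Real.sqrt Real.pi * Real.Gamma (γ + 1 / 2))

lemma Gamma1_pos {γ : ℝ} (hγ : γ > -(1 / 2)) : 0 < Real.Gamma (γ + 1) :=
  Real.Gamma_pos_of_pos (by linarith)

lemma Gamma2_pos {γ : ℝ} (hγ : γ > -(1 / 2)) : 0 < Real.Gamma (γ + 1 / 2) :=
  Real.Gamma_pos_of_pos (by linarith)

lemma Kc_pos {γ : ℝ} (hγ : γ > -(1 / 2)) : 0 < Kc γ := by
  have h1 := Gamma1_pos hγ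
  have h2 := Gamma2_pos hγ
  have h3 : (0:ℝ) < Real.sqrt Real.pi := Real.sqrt_pos.2 Real.pi_pos
  have h4 : (0:ℝ) < (2:ℝ) ^ (2 * γ - 1) := Real.rpow_pos_of_pos (by norm_num) _
  exact div_pos (mul_pos h4 h1) (mul_pos h3 h2)

lemma triArea_nonneg (s t u : ℝ) : 0 ≤ triArea s t u := by
  unfold triArea; positivity

lemma Wker_eq {γ s t u : ℝ} (h : |s - t| ≤ u ∧ u ≤ s + t) :
    Wker γ s t u = Kc γ * triArea s t u ^ (2 * γ - 1) / (s * t * u) ^ (2 * γ) := by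
  rw [Wker, if_pos h, Kc]

lemma Wker_nonneg {γ : ℝ} (hγ : γ > -(1 / 2)) {s t u : ℝ} (hs : 0 < s) (ht : 0 < t)
    (hu : 0 < u) : 0 ≤ Wker γ s t u := by
  rw [Wker]
  split_ifs with h
  · have h1 : (0:ℝ) ≤ triArea s t u ^ (2 * γ - 1) :=
      Real.rpow_nonneg (triArea_nonneg s t u) _
    have h2 : (0:ℝ) < (s * t * u) ^ (2 * γ) := Real.rpow_pos_of_pos (by positivity) _
    have := Kc_pos hγ
    rw [Kc] at this
    positivity
  · exact le_refl _

lemma Wker_symm (γ t : ℝ) (s u : ℝ) : Wker γ s t u = Wker γ u t s := by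
  have hiff : (|s - t| ≤ u ∧ u ≤ s + t) ↔ (|u - t| ≤ s ∧ s ≤ u + t) := by
    rw [abs_le, abs_le]; constructor <;> intro ⟨⟨a, b⟩, c⟩ <;> refine ⟨⟨?_, ?_⟩, ?_⟩ <;> linarith
  have harea : triArea s t u = triArea u t s := by
    unfold triArea; ring_nf
  rw [Wker, Wker]
  by_cases h : |s - t| ≤ u ∧ u ≤ s + t
  · rw [if_pos h, if_pos (hiff.1 h), harea]
    congr 2
    ring_nf
  · rw [if_neg h, if_neg (fun h' => h (hiff.2 h'))]

end QPT
namespace QPT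

lemma betaComplex (a : ℝ) (ha : 0 < a) :
    Complex.betaIntegral a a = ((∫ x in Ioo (0:ℝ) 1, x ^ (a - 1) * (1 - x) ^ (a - 1) : ℝ) : ℂ) := by
  rw [Complex.betaIntegral, intervalIntegral.integral_of_le zero_le_one,
    ← setIntegral_congr_set Ioo_ae_eq_Ioc]
  have : ∀ x ∈ Ioo (0:ℝ) 1, ((x:ℂ) ^ ((a:ℂ) - 1) * ((1:ℂ) - x) ^ ((a:ℂ) - 1)) =
      ((x ^ (a - 1) * (1 - x) ^ (a - 1) : ℝ) : ℂ) := by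
    intro x hx
    obtain ⟨hx0, hx1⟩ := hx
    rw [show ((a:ℂ) - 1) = ((a - 1 : ℝ) : ℂ) by push_cast; ring,
      show ((1:ℂ) - x) = ((1 - x : ℝ) : ℂ) by push_cast; ring,
      ← Complex.ofReal_cpow hx0.le, ← Complex.ofReal_cpow (by linarith : (0:ℝ) ≤ 1 - x)]
    push_cast
    ring
  rw [setIntegral_congr_fun measurableSet_Ioo this]
  exact integral_ofReal

lemma betaReal (a : ℝ) (ha : 0 < a) :
    ∫ x in Ioo (0:ℝ) 1, x ^ (a - 1) * (1 - x) ^ (a - 1) =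
      Real.Gamma a * Real.Gamma a / Real.Gamma (2 * a) := by
  have h := Complex.Gamma_mul_Gamma_eq_betaIntegral (s := (a:ℂ)) (t := (a:ℂ))
    (by simpa using ha) (by simpa using ha)
  rw [betaComplex a ha] at h
  have h2 : ((a:ℂ) + a) = ((2 * a : ℝ) : ℂ) := by push_cast; ring
  rw [h2, Complex.Gamma_ofReal, Complex.Gamma_ofReal] at h
  have hG : Real.Gamma (2 * a) ≠ 0 := (Real.Gamma_pos_of_pos (by linarith)).ne'
  have h3 : Real.Gamma a * Real.Gamma a =
      Real.Gamma (2 * a) * ∫ x in Ioo (0:ℝ) 1, x ^ (a - 1) * (1 - x) ^ (a - 1) := by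
    exact_mod_cast h
  rw [eq_div_iff hG, h3]; ring

lemma betaIntegrable (a : ℝ) (ha : 0 < a) :
    IntegrableOn (fun x : ℝ => x ^ (a - 1) * (1 - x) ^ (a - 1)) (Ioo (0:ℝ) 1) := by
  have h := Complex.betaIntegral_convergent (u := (a:ℂ)) (v := (a:ℂ))
    (by simpa using ha) (by simpa using ha)
  have h2 : IntegrableOn (fun x : ℝ => (x:ℂ) ^ ((a:ℂ) - 1) * ((1:ℂ) - x) ^ ((a:ℂ) - 1))
      (Ioo (0:ℝ) 1) := ((intervalIntegrable_iff_integrableOn_Ioc_of_le zero_le_one).1 h).mono_set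
    Ioo_subset_Ioc_self
  refine (h2.re).congr ?_
  refine (ae_restrict_iff' measurableSet_Ioo).2 (Filter.Eventually.of_forall fun x hx => ?_)
  obtain ⟨hx0, hx1⟩ := hx
  have : ((x:ℂ) ^ ((a:ℂ) - 1) * ((1:ℂ) - x) ^ ((a:ℂ) - 1)) =
      ((x ^ (a - 1) * (1 - x) ^ (a - 1) : ℝ) : ℂ) := by
    rw [show ((a:ℂ) - 1) = ((a - 1 : ℝ) : ℂ) by push_cast; ring,
      show ((1:ℂ) - x) = ((1 - x : ℝ) : ℂ) by push_cast; ring,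
      ← Complex.ofReal_cpow hx0.le, ← Complex.ofReal_cpow (by linarith : (0:ℝ) ≤ 1 - x)]
    push_cast
    ring
  simp [this]

end QPT
namespace QPT

section Mass

variable {γ s t : ℝ}

/-- substitution function -/
private noncomputable def fsub (s t v : ℝ) : ℝ := Real.sqrt ((s - t) ^ 2 + 4 * (s * t) * v)

lemma fsub_pos (hs : 0 < s) (ht : 0 < t) {v : ℝ} (hv : 0 < v) : 0 < fsub s t v := by
  rw [fsub]; apply Real.sqrt_pos.2; positivity

lemma fsub_sq (hs : 0 < s) (ht : 0 < t) {v : ℝ} (hv : 0 < v) :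
    fsub s t v ^ 2 = (s - t) ^ 2 + 4 * (s * t) * v := by
  rw [fsub]; exact Real.sq_sqrt (by positivity)

lemma fsub_mem (hs : 0 < s) (ht : 0 < t) {v : ℝ} (hv : v ∈ Ioo (0:ℝ) 1) :
    fsub s t v ∈ Ioo (|s - t|) (s + t) := by
  obtain ⟨hv0, hv1⟩ := hv
  have hst : 0 < s * t := mul_pos hs ht
  constructor
  · rw [fsub, ← Real.sqrt_sq_eq_abs]
    exact Real.sqrt_lt_sqrt (sq_nonneg _) (by nlinarith)
  · rw [fsub, show s + t = Real.sqrt ((s + t) ^ 2) from (Real.sqrt_sq (by positivity)).symm]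
    exact Real.sqrt_lt_sqrt (by positivity) (by nlinarith)

lemma fsub_image (hs : 0 < s) (ht : 0 < t) :
    fsub s t '' Ioo (0:ℝ) 1 = Ioo (|s - t|) (s + t) := by
  have hst : 0 < s * t := mul_pos hs ht
  ext u
  constructor
  · rintro ⟨v, hv, rfl⟩
    exact fsub_mem hs ht hv
  · rintro ⟨hu1, hu2⟩
    have hu0 : 0 < u := lt_of_le_of_lt (abs_nonneg _) hu1
    have h1 : (s - t) ^ 2 < u ^ 2 := by
      have := pow_lt_pow_left₀ hu1 (abs_nonneg _) (by norm_num : 2 ≠ 0)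
      rwa [_root_.sq_abs] at this
    have h2 : u ^ 2 < (s + t) ^ 2 := pow_lt_pow_left₀ hu2 hu0.le (by norm_num)
    refine ⟨(u ^ 2 - (s - t) ^ 2) / (4 * (s * t)), ⟨div_pos (by nlinarith) (by positivity), ?_⟩, ?_⟩
    · rw [div_lt_one (by positivity)]; nlinarith
    · rw [fsub]
      rw [show (s - t) ^ 2 + 4 * (s * t) * ((u ^ 2 - (s - t) ^ 2) / (4 * (s * t))) = u ^ 2 by
        field_simp; ring]
      exact Real.sqrt_sq hu0.le

lemma fsub_deriv (hs : 0 < s) (ht : 0 < t) {v : ℝ} (hv : v ∈ Ioo (0:ℝ) 1) :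
    HasDerivWithinAt (fsub s t) (2 * (s * t) / fsub s t v) (Ioo (0:ℝ) 1) v := by
  have hP : 0 < (s - t) ^ 2 + 4 * (s * t) * v := by
    have := hv.1; positivity
  have h1 : HasDerivAt (fun v : ℝ => (s - t) ^ 2 + 4 * (s * t) * v) (4 * (s * t)) v := by
    simpa using ((hasDerivAt_id v).const_mul (4 * (s * t))).const_add ((s - t) ^ 2)
  have h2 := (Real.hasDerivAt_sqrt hP.ne').comp v h1
  have h3 : 1 / (2 * Real.sqrt ((s - t) ^ 2 + 4 * (s * t) * v)) * (4 * (s * t)) =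
      2 * (s * t) / fsub s t v := by
    rw [fsub]; ring
  rw [h3] at h2
  exact h2.hasDerivWithinAt

lemma fsub_inj (hs : 0 < s) (ht : 0 < t) : InjOn (fsub s t) (Ioo (0:ℝ) 1) := by
  intro v hv w hw hvw
  have h1 := fsub_sq hs ht hv.1
  have h2 := fsub_sq hs ht hw.1
  rw [hvw] at h1
  have hst : 0 < s * t := mul_pos hs ht
  nlinarith [h1, h2]

lemma subst_pointwise (hγ : γ > -(1 / 2)) (hs : 0 < s) (ht : 0 < t)
    {v : ℝ} (hv : v ∈ Ioo (0:ℝ) 1) :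
    |2 * (s * t) / fsub s t v| •
      (Wker γ s t (fsub s t v) * fsub s t v ^ (2 * γ + 1)) =
      2 * Kc γ * (v * (1 - v)) ^ (γ - 1 / 2) := by
  obtain ⟨hv0, hv1⟩ := hv
  have hst : 0 < s * t := mul_pos hs ht
  set u := fsub s t v with hu_def
  have hu : 0 < u := fsub_pos hs ht hv0
  have hu2 : u ^ 2 = (s - t) ^ 2 + 4 * (s * t) * v := fsub_sq hs ht hv0
  have hmem := fsub_mem hs ht ⟨hv0, hv1⟩
  have hcond : |s - t| ≤ u ∧ u ≤ s + t := ⟨hmem.1.le, hmem.2.le⟩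
  have hX : 0 < v * (1 - v) := by nlinarith
  -- triangle area
  have hinner : (s + t + u) * (s + t - u) * (s - t + u) * (t + u - s) =
      (4 * (s * t)) ^ 2 * (v * (1 - v)) := by
    linear_combination ((s + t) ^ 2 + (s - t) ^ 2 - u ^ 2 -
      ((s - t) ^ 2 + 4 * (s * t) * v)) * hu2
  have harea : triArea s t u = s * t * Real.sqrt (v * (1 - v)) := by
    rw [triArea, hinner, Real.sqrt_mul (by positivity), Real.sqrt_sq (by positivity)]
    ring
  rw [Wker_eq hcond, harea, smul_eq_mul]
  have r1 : (s * t * Real.sqrt (v * (1 - v))) ^ (2 * γ - 1) =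
      (s * t) ^ (2 * γ) / (s * t) * (v * (1 - v)) ^ (γ - 1 / 2) := by
    rw [Real.mul_rpow hst.le (Real.sqrt_nonneg _), Real.rpow_sub hst, Real.rpow_one,
      Real.sqrt_eq_rpow, ← Real.rpow_mul hX.le, show 1 / 2 * (2 * γ - 1) = γ - 1 / 2 by ring]
  have r2 : (s * t * u) ^ (2 * γ) = (s * t) ^ (2 * γ) * u ^ (2 * γ) :=
    Real.mul_rpow hst.le hu.le
  have r3 : u ^ (2 * γ + 1) = u ^ (2 * γ) * u := by
    rw [Real.rpow_add hu, Real.rpow_one]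
  have habs : |2 * (s * t) / u| = 2 * (s * t) / u := abs_of_pos (by positivity)
  rw [r1, r2, r3, habs]
  have h1 : (s * t) ^ (2 * γ) ≠ 0 := (Real.rpow_pos_of_pos hst _).ne'
  have h2 : u ^ (2 * γ) ≠ 0 := (Real.rpow_pos_of_pos hu _).ne'
  field_simp

end Mass

end QPT
namespace QPT

variable {γ s t : ℝ}

lemma const_eval (hγ : γ > -(1 / 2)) :
    2 * Kc γ * (Real.Gamma (γ + 1 / 2) * Real.Gamma (γ + 1 / 2) / Real.Gamma (2 * γ + 1)) = 1 := by
  have hdup := Real.Gamma_mul_Gamma_add_half (γ + 1 / 2)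
  rw [show (1:ℝ) - 2 * (γ + 1 / 2) = -(2 * γ) by ring, show γ + 1 / 2 + 1 / 2 = γ + 1 by ring,
    show 2 * (γ + 1 / 2) = 2 * γ + 1 by ring] at hdup
  have hpow : (2:ℝ) ^ (2 * γ - 1) * (2:ℝ) ^ (-(2 * γ)) = 1 / 2 := by
    rw [← Real.rpow_add two_pos, show 2 * γ - 1 + -(2 * γ) = -1 by ring, Real.rpow_neg_one]
    norm_num
  have h1 := Gamma1_pos hγ
  have h2 := Gamma2_pos hγ
  have hD : 0 < Real.Gamma (2 * γ + 1) := Real.Gamma_pos_of_pos (by linarith)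
  have h3 : (0:ℝ) < Real.sqrt Real.pi := Real.sqrt_pos.2 Real.pi_pos
  have h4 : (0:ℝ) < (2:ℝ) ^ (2 * γ - 1) := Real.rpow_pos_of_pos (by norm_num) _
  have hden : Real.sqrt Real.pi * Real.Gamma (γ + 1 / 2) * Real.Gamma (2 * γ + 1) ≠ 0 := by
    positivity
  rw [Kc, show 2 * ((2:ℝ) ^ (2 * γ - 1) * Real.Gamma (γ + 1) /
      (Real.sqrt Real.pi * Real.Gamma (γ + 1 / 2))) *
      (Real.Gamma (γ + 1 / 2) * Real.Gamma (γ + 1 / 2) / Real.Gamma (2 * γ + 1)) =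
      2 * ((2:ℝ) ^ (2 * γ - 1) * Real.Gamma (γ + 1)) *
        (Real.Gamma (γ + 1 / 2) * Real.Gamma (γ + 1 / 2)) /
        (Real.sqrt Real.pi * Real.Gamma (γ + 1 / 2) * Real.Gamma (2 * γ + 1)) by ring,
    div_eq_one_iff_eq hden]
  linear_combination (2 * (2:ℝ) ^ (2 * γ - 1) * Real.Gamma (γ + 1 / 2)) * hdup +
    (2 * Real.sqrt Real.pi * Real.Gamma (γ + 1 / 2) * Real.Gamma (2 * γ + 1)) * hpow

lemma mass_Ioo (hγ : γ > -(1 / 2)) (hs : 0 < s) (ht : 0 < t) :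
    (∫ u in Ioo (|s - t|) (s + t), Wker γ s t u * u ^ (2 * γ + 1)) = 1 ∧
      IntegrableOn (fun u => Wker γ s t u * u ^ (2 * γ + 1)) (Ioo (|s - t|) (s + t)) := by
  set F : ℝ → ℝ := fun u => Wker γ s t u * u ^ (2 * γ + 1) with hF
  have hderiv : ∀ v ∈ Ioo (0:ℝ) 1,
      HasDerivWithinAt (fsub s t) (2 * (s * t) / fsub s t v) (Ioo (0:ℝ) 1) v :=
    fun v hv => fsub_deriv hs ht hv
  have hinj := fsub_inj hs ht
  have key := integral_image_eq_integral_abs_deriv_smul measurableSet_Ioo hderiv hinj F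
  rw [fsub_image hs ht] at key
  have hEq : EqOn (fun v => |2 * (s * t) / fsub s t v| • F (fsub s t v))
      (fun v => 2 * Kc γ * (v * (1 - v)) ^ (γ - 1 / 2)) (Ioo (0:ℝ) 1) :=
    fun v hv => subst_pointwise hγ hs ht hv
  rw [setIntegral_congr_fun measurableSet_Ioo hEq] at key
  have ha : (0:ℝ) < γ + 1 / 2 := by linarith
  have hbeta := betaReal (γ + 1 / 2) ha
  have hEq2 : EqOn (fun v : ℝ => 2 * Kc γ * (v * (1 - v)) ^ (γ - 1 / 2))
      (fun v : ℝ => 2 * Kc γ * (v ^ (γ + 1 / 2 - 1) * (1 - v) ^ (γ + 1 / 2 - 1)))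
      (Ioo (0:ℝ) 1) := by
    intro v hv
    obtain ⟨hv0, hv1⟩ := hv
    simp only
    rw [show γ + 1 / 2 - 1 = γ - 1 / 2 by ring, Real.mul_rpow hv0.le (by linarith)]
  have hval : ∫ v in Ioo (0:ℝ) 1, 2 * Kc γ * (v * (1 - v)) ^ (γ - 1 / 2) = 1 := by
    rw [setIntegral_congr_fun measurableSet_Ioo hEq2, integral_const_mul, hbeta,
      show 2 * (γ + 1 / 2) = 2 * γ + 1 by ring]
    exact const_eval hγ
  constructor
  · rw [key, hval]
  · have hib : IntegrableOn (fun v : ℝ => 2 * Kc γ * (v * (1 - v)) ^ (γ - 1 / 2))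
        (Ioo (0:ℝ) 1) := by
      refine (((betaIntegrable (γ + 1 / 2) ha).const_mul (2 * Kc γ)).congr ?_)
      exact (ae_restrict_iff' measurableSet_Ioo).2
        (Filter.Eventually.of_forall fun v hv => (hEq2 hv).symm)
    have := (integrableOn_image_iff_integrableOn_abs_deriv_smul measurableSet_Ioo hderiv hinj
      F)
    rw [fsub_image hs ht] at this
    rw [this]
    exact hib.congr ((ae_restrict_iff' measurableSet_Ioo).2
      (Filter.Eventually.of_forall fun v hv => (hEq hv).symm))

lemma indicator_ae (hs : 0 < s) (ht : 0 < t) :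
    (Ioi (0:ℝ)).indicator (fun u => Wker γ s t u * u ^ (2 * γ + 1)) =ᵐ[volume]
      (Ioo (|s - t|) (s + t)).indicator (fun u => Wker γ s t u * u ^ (2 * γ + 1)) := by
  have hnull : volume ({|s - t|, s + t} : Set ℝ) = 0 :=
    measure_union_null (measure_singleton _) (measure_singleton _)
  refine (MeasureTheory.ae_iff).2 (measure_mono_null (fun u hu => ?_) hnull)
  simp only [Set.mem_setOf_eq] at hu
  by_contra hmem
  apply hu
  simp only [Set.mem_insert_iff, Set.mem_singleton_iff] at hmem
  push_neg at hmem
  obtain ⟨hne1, hne2⟩ := hmem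
  by_cases hIoo : u ∈ Ioo (|s - t|) (s + t)
  · have hu0 : 0 < u := lt_of_le_of_lt (abs_nonneg _) hIoo.1
    rw [Set.indicator_of_mem (mem_Ioi.2 hu0), Set.indicator_of_mem hIoo]
  · rw [Set.indicator_of_notMem hIoo]
    by_cases hp : u ∈ Ioi (0:ℝ)
    · rw [Set.indicator_of_mem hp]
      have : ¬(|s - t| ≤ u ∧ u ≤ s + t) := by
        intro ⟨hl, hr⟩
        exact hIoo ⟨lt_of_le_of_ne hl (Ne.symm hne1), lt_of_le_of_ne hr hne2⟩
      rw [Wker, if_neg this, zero_mul]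
    · rw [Set.indicator_of_notMem hp]

lemma mass_Ioi (hγ : γ > -(1 / 2)) (hs : 0 < s) (ht : 0 < t) :
    (∫ u in Ioi (0:ℝ), Wker γ s t u * u ^ (2 * γ + 1)) = 1 ∧
      IntegrableOn (fun u => Wker γ s t u * u ^ (2 * γ + 1)) (Ioi (0:ℝ)) := by
  obtain ⟨hval, hint⟩ := mass_Ioo hγ hs ht
  have hae := indicator_ae (γ := γ) hs ht
  constructor
  · rw [← integral_indicator measurableSet_Ioi, integral_congr_ae hae,
      integral_indicator measurableSet_Ioo, hval]
  · exact (integrable_indicator_iff measurableSet_Ioi).1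
      (((integrable_indicator_iff measurableSet_Ioo).2 hint).congr hae.symm)

end QPT
namespace QPT

open ENNReal

variable {γ s t u : ℝ}

lemma measurable_Wker_pair (γ t : ℝ) : Measurable (fun p : ℝ × ℝ => Wker γ p.1 t p.2) := by
  simp only [Wker]
  refine Measurable.ite ?_ ?_ measurable_const
  · exact (measurableSet_le (by fun_prop) measurable_snd).inter
      (measurableSet_le measurable_snd (by fun_prop))
  · unfold triArea
    fun_prop

lemma measurable_Wker_right (γ s t : ℝ) : Measurable (fun u => Wker γ s t u) :=
  (measurable_Wker_pair γ t).comp (measurable_const.prodMk measurable_id)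

lemma measurable_Wker_left (γ t : ℝ) (u : ℝ) : Measurable (fun s => Wker γ s t u) :=
  (measurable_Wker_pair γ t).comp (measurable_id.prodMk measurable_const)

lemma mass_lintegral (hγ : γ > -(1 / 2)) (hs : 0 < s) (ht : 0 < t) :
    ∫⁻ u in Ioi (0:ℝ), ENNReal.ofReal (Wker γ s t u * u ^ (2 * γ + 1)) = 1 := by
  obtain ⟨hval, hint⟩ := mass_Ioi hγ hs ht
  have hnn : 0 ≤ᵐ[volume.restrict (Ioi (0:ℝ))] fun u => Wker γ s t u * u ^ (2 * γ + 1) := by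
    refine (ae_restrict_iff' measurableSet_Ioi).2 (Filter.Eventually.of_forall fun u hu => ?_)
    exact mul_nonneg (Wker_nonneg hγ hs ht hu) (Real.rpow_nonneg (le_of_lt hu) _)
  rw [← MeasureTheory.ofReal_integral_eq_lintegral_ofReal hint hnn, hval, ENNReal.ofReal_one]

lemma mass_mu (hγ : γ > -(1 / 2)) (hs : 0 < s) (ht : 0 < t) :
    ∫⁻ u, ENNReal.ofReal (Wker γ s t u) ∂(muGamma γ) = 1 := by
  rw [muGamma, lintegral_withDensity_eq_lintegral_mul _
    (by fun_prop : Measurable fun u : ℝ => ENNReal.ofReal (u ^ (2 * γ + 1)))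
    ((measurable_Wker_right γ s t).ennreal_ofReal)]
  rw [← mass_lintegral hγ hs ht]
  refine setLIntegral_congr_fun measurableSet_Ioi (fun u hu => ?_)
  simp only [Pi.mul_apply]
  rw [← ENNReal.ofReal_mul (Real.rpow_nonneg (le_of_lt hu) _), mul_comm]

lemma mass_mu_left (hγ : γ > -(1 / 2)) (ht : 0 < t) (hu : 0 < u) :
    ∫⁻ s, ENNReal.ofReal (Wker γ s t u) ∂(muGamma γ) = 1 := by
  rw [← mass_mu hγ hu ht]
  exact lintegral_congr fun s => by rw [Wker_symm]

end QPT
namespace QPT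

open ENNReal

lemma nu_ac (γ : ℝ) : volume.restrict (Ioi (0:ℝ)) ≪ muGamma γ := by
  rw [muGamma]
  refine withDensity_absolutelyContinuous' (by fun_prop) ?_
  refine (ae_restrict_iff' measurableSet_Ioi).2 (Filter.Eventually.of_forall fun u hu => ?_)
  simp only [ne_eq, ENNReal.ofReal_eq_zero, not_le]
  exact Real.rpow_pos_of_pos hu _

lemma mu_ac (γ : ℝ) : muGamma γ ≪ volume.restrict (Ioi (0:ℝ)) := by
  rw [muGamma]; exact withDensity_absolutelyContinuous _ _

lemma mu_ae_Ioi (γ : ℝ) : ∀ᵐ s ∂(muGamma γ), s ∈ Ioi (0:ℝ) :=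
  (mu_ac γ).ae_le (ae_restrict_mem measurableSet_Ioi)

instance mu_sigmaFinite (γ : ℝ) : SigmaFinite (muGamma γ) := by
  rw [muGamma]; infer_instance

lemma translate_stronglyMeasurable (a b d γ t : ℝ) {g : ℝ → ℂ} (hg : Measurable g) :
    StronglyMeasurable (fun s => qpTranslate a b d γ t g s) := by
  have hf : StronglyMeasurable (fun p : ℝ × ℝ =>
      g p.2 * Wabd a b d γ p.1 t p.2 *
        Complex.exp (Complex.I * ((a * p.2 ^ 2 + d * p.2 : ℝ) : ℂ)) *
        ((p.2 ^ (2 * γ + 1) : ℝ) : ℂ)) := by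
    refine Measurable.stronglyMeasurable ?_
    refine Measurable.mul (Measurable.mul (Measurable.mul ?_ ?_) ?_) ?_
    · exact hg.comp measurable_snd
    · unfold Wabd
      refine Measurable.mul ?_ ?_
      · exact Complex.measurable_ofReal.comp (measurable_Wker_pair γ t)
      · exact Complex.continuous_exp.measurable.comp
          (by fun_prop : Measurable fun p : ℝ × ℝ =>
            -Complex.I * ((a * (p.1 ^ 2 + t ^ 2 + p.2 ^ 2) + d * (p.1 + t + p.2) : ℝ) : ℂ))
    · exact Complex.continuous_exp.measurable.comp
        (by fun_prop : Measurable fun p : ℝ × ℝ =>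
          Complex.I * ((a * p.2 ^ 2 + d * p.2 : ℝ) : ℂ))
    · fun_prop
  exact hf.integral_prod_right'

lemma nnnorm_exp_I_mul (r : ℝ) : ‖Complex.exp (Complex.I * (r : ℂ))‖₊ = 1 := by
  ext
  simp [Complex.norm_exp]

lemma nnnorm_exp_neg_I_mul (r : ℝ) : ‖Complex.exp (-Complex.I * (r : ℂ))‖₊ = 1 := by
  ext
  simp [Complex.norm_exp]

lemma translate_bound {γ t : ℝ} (a b d : ℝ) (hγ : γ > -(1 / 2)) (ht : 0 < t)
    {g : ℝ → ℂ} (hg : Measurable g) {s : ℝ} (hs : 0 < s) :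
    (‖qpTranslate a b d γ t g s‖₊ : ℝ≥0∞) ≤
      ∫⁻ u, ENNReal.ofReal (Wker γ s t u) * (‖g u‖₊ : ℝ≥0∞) ∂(muGamma γ) := by
  refine le_trans (enorm_integral_le_lintegral_enorm _) (le_of_eq ?_)
  simp only [enorm_eq_nnnorm]
  rw [muGamma, lintegral_withDensity_eq_lintegral_mul _
    (by fun_prop : Measurable fun u : ℝ => ENNReal.ofReal (u ^ (2 * γ + 1)))
    (show Measurable fun u => ENNReal.ofReal (Wker γ s t u) * (‖g u‖₊ : ℝ≥0∞) from
      ((measurable_Wker_right γ s t).ennreal_ofReal).mul (by fun_prop))]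
  refine setLIntegral_congr_fun measurableSet_Ioi (fun u hu => ?_)
  simp only [Pi.mul_apply, nnnorm_mul, ENNReal.coe_mul]
  rw [Wabd]
  simp only [nnnorm_mul, ENNReal.coe_mul]
  rw [nnnorm_exp_I_mul, nnnorm_exp_neg_I_mul]
  have h1 : (‖((Wker γ s t u : ℝ) : ℂ)‖₊ : ℝ≥0∞) = ENNReal.ofReal (Wker γ s t u) := by
    rw [Complex.nnnorm_real, ← enorm_eq_nnnorm, Real.enorm_eq_ofReal (Wker_nonneg hγ hs ht hu)]
  have h2 : (‖((u ^ (2 * γ + 1) : ℝ) : ℂ)‖₊ : ℝ≥0∞) = ENNReal.ofReal (u ^ (2 * γ + 1)) := by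
    rw [Complex.nnnorm_real, ← enorm_eq_nnnorm, Real.enorm_eq_ofReal (Real.rpow_nonneg (le_of_lt hu) _)]
  rw [h1, h2]
  simp only [ENNReal.coe_one, one_mul, mul_one]
  ring

end QPT
namespace QPT

open ENNReal

lemma jensen_step {γ t : ℝ} (hγ : γ > -(1 / 2)) (ht : 0 < t) {φ : ℝ → ℝ≥0∞}
    (hφ : Measurable φ) {r : ℝ} (hr : 1 ≤ r) {s : ℝ} (hs : 0 < s) :
    (∫⁻ u, ENNReal.ofReal (Wker γ s t u) * φ u ∂(muGamma γ)) ^ r ≤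
      ∫⁻ u, ENNReal.ofReal (Wker γ s t u) * φ u ^ r ∂(muGamma γ) := by
  set k : ℝ → ℝ≥0∞ := fun u => ENNReal.ofReal (Wker γ s t u) with hk
  have hkm : Measurable k := (measurable_Wker_right γ s t).ennreal_ofReal
  rcases eq_or_lt_of_le hr with heq | hlt
  · rw [← heq]
    simp [ENNReal.rpow_one]
  · set q := Real.conjExponent r with hq
    have hcq : r.HolderConjugate q := Real.HolderConjugate.conjExponent hlt
    have hr0 : (0:ℝ) < r := hcq.pos
    have hq0 : (0:ℝ) < q := hcq.symm.pos
    have hH := ENNReal.lintegral_mul_le_Lp_mul_Lq (muGamma γ) hcq.symm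
      (f := fun u => k u ^ (1 / q)) (g := fun u => k u ^ (1 / r) * φ u)
      (hkm.pow_const _).aemeasurable ((hkm.pow_const _).mul hφ).aemeasurable
    simp only [Pi.mul_apply] at hH
    have e1 : ∀ u, k u ^ (1 / q) * (k u ^ (1 / r) * φ u) = k u * φ u := by
      intro u
      rw [← mul_assoc, ← ENNReal.rpow_add_of_nonneg _ _ (by positivity) (by positivity),
        show 1 / q + 1 / r = 1 by
          rw [one_div, one_div, add_comm]; exact hcq.inv_add_inv_eq_one,
        ENNReal.rpow_one]
    have e2 : ∀ u, (k u ^ (1 / q)) ^ q = k u := by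
      intro u
      rw [← ENNReal.rpow_mul, one_div_mul_cancel hq0.ne', ENNReal.rpow_one]
    have e3 : ∀ u, (k u ^ (1 / r) * φ u) ^ r = k u * φ u ^ r := by
      intro u
      rw [ENNReal.mul_rpow_of_nonneg _ _ hr0.le, ← ENNReal.rpow_mul,
        one_div_mul_cancel hr0.ne', ENNReal.rpow_one]
    simp_rw [e1, e2, e3] at hH
    rw [mass_mu hγ hs ht, ENNReal.one_rpow, one_mul] at hH
    calc (∫⁻ u, k u * φ u ∂(muGamma γ)) ^ r
        ≤ ((∫⁻ u, k u * φ u ^ r ∂(muGamma γ)) ^ (1 / r)) ^ r :=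
          ENNReal.rpow_le_rpow hH hr0.le
      _ = ∫⁻ u, k u * φ u ^ r ∂(muGamma γ) := by
          rw [← ENNReal.rpow_mul, one_div_mul_cancel hr0.ne', ENNReal.rpow_one]

end QPT
/-- the generalized translation is an `L^p_γ → L^p_γ` contraction,
`1 ≤ p ≤ ∞`. -/
theorem qpTranslate_eLpNorm_le (a b d γ : ℝ) (hb : b ≠ 0) (hγ : γ > -(1 / 2))
    (p : ℝ≥0∞) (hp : 1 ≤ p) (h : ℝ → ℂ) (hh : MemLp h p (muGamma γ)) :
    ∀ t ∈ Ioi (0 : ℝ),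
      MemLp (qpTranslate a b d γ t h) p (muGamma γ) ∧
        eLpNorm (qpTranslate a b d γ t h) p (muGamma γ) ≤ eLpNorm h p (muGamma γ) := by
  intro t ht'
  have ht : 0 < t := ht'
  have hp0 : p ≠ 0 := (lt_of_lt_of_le zero_lt_one hp).ne'
  set g : ℝ → ℂ := hh.aestronglyMeasurable.mk h with hgdef
  have hgsm : StronglyMeasurable g := hh.aestronglyMeasurable.stronglyMeasurable_mk
  have hhg : h =ᵐ[muGamma γ] g := hh.aestronglyMeasurable.ae_eq_mk
  have hgm : Measurable g := hgsm.measurable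
  have hhgν : h =ᵐ[volume.restrict (Ioi (0:ℝ))] g := (QPT.nu_ac γ).ae_le hhg
  have hTeq : qpTranslate a b d γ t h = qpTranslate a b d γ t g := by
    funext s
    refine integral_congr_ae ?_
    filter_upwards [hhgν] with u hu
    rw [hu]
  have haesm : AEStronglyMeasurable (qpTranslate a b d γ t h) (muGamma γ) := by
    rw [hTeq]
    exact (QPT.translate_stronglyMeasurable a b d γ t hgm).aestronglyMeasurable
  have hφeq : (fun u => (‖h u‖₊ : ℝ≥0∞)) =ᵐ[muGamma γ] fun u => (‖g u‖₊ : ℝ≥0∞) := by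
    filter_upwards [hhg] with u hu
    rw [hu]
  have hφm : Measurable fun u => (‖g u‖₊ : ℝ≥0∞) := hgm.nnnorm.coe_nnreal_ennreal
  have hbd : ∀ s : ℝ, 0 < s → (‖qpTranslate a b d γ t h s‖₊ : ℝ≥0∞) ≤
      ∫⁻ u, ENNReal.ofReal (Wker γ s t u) * (‖g u‖₊ : ℝ≥0∞) ∂(muGamma γ) := by
    intro s hs
    rw [hTeq]
    exact QPT.translate_bound a b d hγ ht hgm hs
  have hle : eLpNorm (qpTranslate a b d γ t h) p (muGamma γ) ≤ eLpNorm h p (muGamma γ) := by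
    by_cases hpt : p = ∞
    · subst hpt
      rw [eLpNorm_exponent_top, eLpNorm_exponent_top]
      set C := eLpNormEssSup h (muGamma γ) with hC
      have hCg : ∀ᵐ u ∂(muGamma γ), (‖g u‖₊ : ℝ≥0∞) ≤ C := by
        filter_upwards [hφeq, ae_le_essSup (fun u => (‖h u‖₊ : ℝ≥0∞))] with u h1 h2
        rw [← h1]
        exact h2
      refine essSup_le_of_ae_le C ?_
      filter_upwards [QPT.mu_ae_Ioi γ] with s hs
      refine le_trans (hbd s hs) ?_
      calc ∫⁻ u, ENNReal.ofReal (Wker γ s t u) * (‖g u‖₊ : ℝ≥0∞) ∂(muGamma γ)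
          ≤ ∫⁻ u, ENNReal.ofReal (Wker γ s t u) * C ∂(muGamma γ) :=
            lintegral_mono_ae (hCg.mono fun u hu => mul_le_mul_right hu _)
        _ = (∫⁻ u, ENNReal.ofReal (Wker γ s t u) ∂(muGamma γ)) * C :=
            lintegral_mul_const _ ((QPT.measurable_Wker_right γ s t).ennreal_ofReal)
        _ = C := by rw [QPT.mass_mu hγ hs ht, one_mul]
    · have hr1 : (1:ℝ) ≤ p.toReal := by
        rw [show (1:ℝ) = (1:ℝ≥0∞).toReal by simp]
        exact ENNReal.toReal_mono hpt hp
      have hr0 : (0:ℝ) < p.toReal := lt_of_lt_of_le zero_lt_one hr1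
      rw [eLpNorm_eq_lintegral_rpow_enorm_toReal hp0 hpt, eLpNorm_eq_lintegral_rpow_enorm_toReal hp0 hpt]
      simp only [enorm_eq_nnnorm]
      refine ENNReal.rpow_le_rpow ?_ (by positivity)
      have hhr : ∫⁻ u, (‖h u‖₊ : ℝ≥0∞) ^ p.toReal ∂(muGamma γ) =
          ∫⁻ u, (‖g u‖₊ : ℝ≥0∞) ^ p.toReal ∂(muGamma γ) :=
        lintegral_congr_ae (hφeq.mono fun u hu => by dsimp only at hu ⊢; rw [hu])
      rw [hhr]
      have hmeas : AEMeasurable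
          (Function.uncurry fun s u =>
            ENNReal.ofReal (Wker γ s t u) * (‖g u‖₊ : ℝ≥0∞) ^ p.toReal)
          ((muGamma γ).prod (muGamma γ)) := by
        refine Measurable.aemeasurable ?_
        exact ((QPT.measurable_Wker_pair γ t).ennreal_ofReal).mul
          (((hφm.comp measurable_snd)).pow_const _)
      calc ∫⁻ s, (‖qpTranslate a b d γ t h s‖₊ : ℝ≥0∞) ^ p.toReal ∂(muGamma γ)
          ≤ ∫⁻ s, ∫⁻ u, ENNReal.ofReal (Wker γ s t u) * (‖g u‖₊ : ℝ≥0∞) ^ p.toReal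
              ∂(muGamma γ) ∂(muGamma γ) := by
            refine lintegral_mono_ae ?_
            filter_upwards [QPT.mu_ae_Ioi γ] with s hs
            refine le_trans (ENNReal.rpow_le_rpow (hbd s hs) hr0.le) ?_
            exact QPT.jensen_step hγ ht hφm hr1 hs
        _ = ∫⁻ u, (‖g u‖₊ : ℝ≥0∞) ^ p.toReal ∂(muGamma γ) := by
            rw [lintegral_lintegral_swap hmeas]
            refine lintegral_congr_ae ?_
            filter_upwards [QPT.mu_ae_Ioi γ] with u hu
            rw [lintegral_mul_const _ ((QPT.measurable_Wker_left γ t u).ennreal_ofReal),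
              QPT.mass_mu_left hγ ht hu, one_mul]
  exact ⟨⟨haesm, lt_of_le_of_lt hle hh.2⟩, hle⟩
end
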